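/- arXiv:1607.01251 — 4 statements merged into one kernel-verified Lean document; each statement's English description precedes it below -/
import Mathlib

section
/- Let f and f* be probability density functions with respect to a σ-finite measure μ, and let X be a random variable with density f*. For any u ∈ (0,1), E*[log(1 + u(f*(X)/f(X) − 1))] ≥ 0, with equality if and only if f(x) = f*(x) almost surely with respect to the f* distribution. -/
open MeasureTheory Filter
open scoped NNReal ENNReal

lemma pfanzagl_key (u a b : ℝ) (hu0 : 0 < u) (hu1 : u < 1) (ha : 0 < a) (hb : 0 ≤ b) :
    b * (a / ((1 - u) * a + u * b)) ≤ (1 - u) * b + u * a := by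
  have hd : 0 < (1 - u) * a + u * b := by nlinarith
  rw [mul_div_assoc', div_le_iff₀ hd]
  nlinarith [sq_nonneg (a - b), mul_pos hu0 (sub_pos.2 hu1)]

/-- Pfanzagl's inequality: for densities `f` and `fstar` w.r.t. a σ-finite
measure `μ`, with `ν` the distribution with density `fstar`, and `u ∈ (0,1)`,
`E*[log(1 + u(f*(X)/f(X) − 1))] ≥ 0`, with equality iff `f = fstar`
`ν`-almost surely. -/
theorem pfanzagl_inequality {α : Type*} [MeasurableSpace α]
    (μ : Measure α) [SigmaFinite μ]
    (f fstar : α → ℝ) (hfm : Measurable f) (hfsm : Measurable fstar)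
    (hf0 : ∀ x, 0 ≤ f x) (hfs0 : ∀ x, 0 ≤ fstar x)
    (hfd : ∫ x, f x ∂μ = 1) (hfsd : ∫ x, fstar x ∂μ = 1)
    (ν : Measure α)
    (hν : ν = μ.withDensity (fun x => ENNReal.ofReal (fstar x)))
    (hpos : ∀ᵐ x ∂ν, 0 < f x)
    (u : ℝ) (hu : u ∈ Set.Ioo (0 : ℝ) 1)
    (hint : Integrable (fun x => Real.log (1 + u * (fstar x / f x - 1))) ν) :
    0 ≤ ∫ x, Real.log (1 + u * (fstar x / f x - 1)) ∂ν ∧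
    ((∫ x, Real.log (1 + u * (fstar x / f x - 1)) ∂ν = 0) ↔
      (∀ᵐ x ∂ν, f x = fstar x)) := by
  obtain ⟨hu0, hu1⟩ := hu
  set g : α → ℝ := fun x => 1 + u * (fstar x / f x - 1) with hg_def
  -- integrability of f, fstar w.r.t. μ
  have hfi : Integrable f μ := by
    by_contra h; rw [integral_undef h] at hfd; norm_num at hfd
  have hfsi : Integrable fstar μ := by
    by_contra h; rw [integral_undef h] at hfsd; norm_num at hfsd
  -- ν is a probability measure
  have hνuniv : ν Set.univ = 1 := by
    rw [hν, withDensity_apply _ MeasurableSet.univ, setLIntegral_univ,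
      ← ofReal_integral_eq_lintegral_ofReal hfsi (ae_of_all _ hfs0), hfsd, ENNReal.ofReal_one]
  haveI : IsProbabilityMeasure ν := ⟨hνuniv⟩
  -- measurability of g
  have hgm : Measurable g :=
    measurable_const.add (measurable_const.mul ((hfsm.div hfm).sub measurable_const))
  -- a.e. ν, g is bounded below by 1 - u > 0
  have h1u : (0:ℝ) < 1 - u := by linarith
  have hglb : ∀ᵐ x ∂ν, 1 - u ≤ g x := by
    filter_upwards [hpos] with x hx
    have : 0 ≤ fstar x / f x := div_nonneg (hfs0 x) (hx.le)
    simp only [hg_def]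
    nlinarith
  have hgpos : ∀ᵐ x ∂ν, 0 < g x := by
    filter_upwards [hglb] with x hx; linarith
  -- pointwise: 1 - (g x)⁻¹ ≤ log (g x)
  have hkey : ∀ᵐ x ∂ν, 1 - (g x)⁻¹ ≤ Real.log (g x) := by
    filter_upwards [hgpos] with x hx
    have := Real.log_le_sub_one_of_pos (inv_pos.2 hx)
    rw [Real.log_inv] at this
    linarith
  -- integrability of 1 - g⁻¹ and of g⁻¹
  have hginvm : Measurable fun x => (g x)⁻¹ := hgm.inv
  have hginv_int : Integrable (fun x => (g x)⁻¹) ν := by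
    refine Integrable.mono' (integrable_const ((1 - u)⁻¹)) hginvm.aestronglyMeasurable ?_
    filter_upwards [hglb, hgpos] with x h1 h2
    rw [Real.norm_eq_abs, abs_of_nonneg (inv_nonneg.2 h2.le)]
    exact inv_anti₀ h1u h1
  have hh_int : Integrable (fun x => 1 - (g x)⁻¹) ν := (integrable_const 1).sub hginv_int
  -- ∫ g⁻¹ dν ≤ 1
  have hμpos : ∀ᵐ x ∂μ, ENNReal.ofReal (fstar x) ≠ 0 → 0 < f x := by
    rw [← ae_withDensity_iff hfsm.ennreal_ofReal, ← hν]; exact hpos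
  have hginv_le : ∫ x, (g x)⁻¹ ∂ν ≤ 1 := by
    have hrw : ∫ x, (g x)⁻¹ ∂ν = ∫ x, fstar x * (g x)⁻¹ ∂μ := by
      rw [hν]
      have : (fun x => ENNReal.ofReal (fstar x))
          = fun x => ((Real.toNNReal (fstar x) : ℝ≥0) : ℝ≥0∞) := rfl
      rw [this, integral_withDensity_eq_integral_smul hfsm.real_toNNReal]
      congr 1; ext x
      rw [NNReal.smul_def, smul_eq_mul, Real.coe_toNNReal _ (hfs0 x)]
    rw [hrw]
    have hrhs : Integrable (fun x => (1 - u) * fstar x + u * f x) μ :=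
      (hfsi.const_mul _).add (hfi.const_mul _)
    have hle : ∀ᵐ x ∂μ, fstar x * (g x)⁻¹ ≤ (1 - u) * fstar x + u * f x := by
      filter_upwards [hμpos] with x hx
      rcases eq_or_lt_of_le (hfs0 x) with h0 | h0
      · rw [← h0]; simp only [zero_mul]; nlinarith [hf0 x]
      · have hfx : 0 < f x := hx (ne_of_gt (ENNReal.ofReal_pos.2 h0))
        have hgx : g x = ((1 - u) * f x + u * fstar x) / f x := by
          simp only [hg_def]; field_simp; ring
        rw [hgx, inv_div]
        exact pfanzagl_key u (f x) (fstar x) hu0 hu1 hfx (hfs0 x)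
    have hnn : 0 ≤ᵐ[μ] fun x => fstar x * (g x)⁻¹ := by
      filter_upwards [hμpos] with x hx
      rcases eq_or_lt_of_le (hfs0 x) with h0 | h0
      · simp only [Pi.zero_apply, ← h0, zero_mul]; exact le_refl 0
      · have hfx : 0 < f x := hx (ne_of_gt (ENNReal.ofReal_pos.2 h0))
        have hgx : 0 < g x := by
          have : 0 ≤ fstar x / f x := div_nonneg (hfs0 x) hfx.le
          simp only [hg_def]; nlinarith
        positivity
    calc ∫ x, fstar x * (g x)⁻¹ ∂μ ≤ ∫ x, ((1 - u) * fstar x + u * f x) ∂μ :=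
          integral_mono_of_nonneg hnn hrhs hle
      _ = (1 - u) * ∫ x, fstar x ∂μ + u * ∫ x, f x ∂μ := by
          rw [integral_add (hfsi.const_mul _) (hfi.const_mul _), integral_const_mul,
            integral_const_mul]
      _ = 1 := by rw [hfd, hfsd]; ring
  -- ∫ (1 - g⁻¹) dν ≥ 0
  have hh_nonneg : 0 ≤ ∫ x, (1 - (g x)⁻¹) ∂ν := by
    rw [integral_sub (integrable_const 1) hginv_int, integral_const, probReal_univ]
    simp only [ENNReal.toReal_one, smul_eq_mul, one_mul]
    linarith
  -- main inequality
  have hmain : ∫ x, (1 - (g x)⁻¹) ∂ν ≤ ∫ x, Real.log (g x) ∂ν :=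
    integral_mono_ae hh_int hint hkey
  refine ⟨le_trans hh_nonneg hmain, ?_, ?_⟩
  · -- equality implies f = fstar a.e.
    intro heq
    have hdiff_int : Integrable (fun x => Real.log (g x) - (1 - (g x)⁻¹)) ν := hint.sub hh_int
    have hdiff_nn : 0 ≤ᵐ[ν] fun x => Real.log (g x) - (1 - (g x)⁻¹) := by
      filter_upwards [hkey] with x hx
      simp only [Pi.zero_apply]; linarith
    have hdiff0 : ∫ x, (Real.log (g x) - (1 - (g x)⁻¹)) ∂ν = 0 := by
      rw [integral_sub hint hh_int, heq]
      linarith [hh_nonneg, hmain, heq ▸ hmain]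
    have hae : (fun x => Real.log (g x) - (1 - (g x)⁻¹)) =ᵐ[ν] 0 :=
      (integral_eq_zero_iff_of_nonneg_ae hdiff_nn hdiff_int).1 hdiff0
    filter_upwards [hae, hgpos, hpos] with x hx hgx hfx
    have hx' : Real.log (g x) = 1 - (g x)⁻¹ := by
      have := hx; simp only [Pi.zero_apply] at this; linarith
    have hg1 : g x = 1 := by
      by_contra hne
      have hinv1 : (g x)⁻¹ ≠ 1 := fun h => hne (by
        have := congrArg Inv.inv h; simpa using this)
      have := Real.log_lt_sub_one_of_pos (inv_pos.2 hgx) hinv1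
      rw [Real.log_inv] at this
      linarith
    have : fstar x / f x = 1 := by
      simp only [hg_def] at hg1
      have : u * (fstar x / f x - 1) = 0 := by linarith
      have := mul_eq_zero.1 this
      rcases this with h | h
      · exact absurd h (ne_of_gt hu0)
      · linarith
    field_simp at this
    linarith
  · -- f = fstar a.e. implies integral = 0
    intro heq
    have : (fun x => Real.log (g x)) =ᵐ[ν] 0 := by
      filter_upwards [heq, hpos] with x hx hfx
      simp only [hg_def, Pi.zero_apply, hx, div_self (ne_of_gt (hx ▸ hfx))]
      norm_num
    calc ∫ x, Real.log (g x) ∂ν = ∫ _x, (0:ℝ) ∂ν := integral_congr_ae this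
      _ = 0 := integral_zero _ _
end

section
/- Let G* be the mixing distribution with G*({log n}) = c{n(log n)(log log n)²}^{−1} for n = 20, 21, … (c a normalizing constant), and let f(x; G*) be the corresponding Poisson mixture. Then f(x; G*) ≤ 1/x for all x ≥ 1, and consequently E*[log f(X; G*)] = −∞. -/
open Real MeasureTheory Filter Set Nat

namespace PMIKL


lemma exp_le_inv {x : ℝ} (h1 : x < 1) : Real.exp x ≤ (1 - x)⁻¹ := by
  have h := Real.add_one_le_exp (-x)
  have hpos : (0:ℝ) < 1 - x := by linarith
  have h2 : (0:ℝ) < Real.exp x := Real.exp_pos x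
  rw [Real.exp_neg] at h
  have h3 : (1 - x) * Real.exp x ≤ 1 := by
    have := mul_le_mul_of_nonneg_right h h2.le
    rwa [inv_mul_cancel₀ h2.ne', neg_add_eq_sub] at this
  rw [inv_eq_one_div, le_div_iff₀ hpos]
  linarith

lemma explog : Real.exp (21/20) ≤ Real.log 20 := by
  have he : Real.exp 1 < 2.7182818286 := Real.exp_one_lt_d9
  have h1 : Real.exp (1/20) ≤ (1 - 1/20 : ℝ)⁻¹ := exp_le_inv (by norm_num)
  have h2 : Real.exp (21/20) ≤ 2.8614 := by
    have e : Real.exp (21/20 : ℝ) = Real.exp 1 * Real.exp (1/20) := by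
      rw [← Real.exp_add]; norm_num
    rw [e]
    calc Real.exp 1 * Real.exp (1/20) ≤ 2.7182818286 * (1 - 1/20 : ℝ)⁻¹ :=
          mul_le_mul he.le h1 (Real.exp_pos _).le (by norm_num)
      _ ≤ 2.8614 := by norm_num
  have h3 : Real.exp (Real.exp (21/20)) ≤ 20 := by
    have hA : Real.exp (Real.exp (21/20)) ≤ Real.exp 2.8614 := Real.exp_le_exp.2 h2
    refine hA.trans ?_
    have e2 : Real.exp (2.8614 : ℝ) = Real.exp 1 * Real.exp 1 * Real.exp (4 * 0.21535) := by
      rw [← Real.exp_add, ← Real.exp_add]; norm_num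
    have e3 : Real.exp ((4:ℕ) * (0.21535:ℝ)) = Real.exp 0.21535 ^ (4:ℕ) := Real.exp_nat_mul _ 4
    have h4 : Real.exp (0.21535:ℝ) ≤ (1 - 0.21535 : ℝ)⁻¹ := exp_le_inv (by norm_num)
    rw [e2]
    have : Real.exp (4 * (0.21535:ℝ)) ≤ ((1 - 0.21535 : ℝ)⁻¹)^4 := by
      rw [show ((4:ℝ) * 0.21535) = ((4:ℕ):ℝ) * 0.21535 by norm_num, e3]
      exact pow_le_pow_left₀ (Real.exp_pos _).le h4 4
    calc Real.exp 1 * Real.exp 1 * Real.exp (4 * (0.21535:ℝ))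
        ≤ 2.7182818286 * 2.7182818286 * ((1 - 0.21535 : ℝ)⁻¹)^4 := by
          apply mul_le_mul (mul_le_mul he.le he.le (Real.exp_pos _).le (by norm_num))
            this (Real.exp_pos _).le (by positivity)
      _ ≤ 20 := by norm_num
  calc Real.exp (21/20) = Real.log (Real.exp (Real.exp (21/20))) := (Real.log_exp _).symm
    _ ≤ Real.log 20 := Real.log_le_log (Real.exp_pos _) h3

lemma llog20 : 21/20 ≤ Real.log (Real.log 20) := by
  calc (21/20 : ℝ) = Real.log (Real.exp (21/20)) := (Real.log_exp _).symm
    _ ≤ Real.log (Real.log 20) := Real.log_le_log (Real.exp_pos _) explog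

lemma log20_gt2 : (2:ℝ) < Real.log 20 := by
  have := Real.add_one_le_exp (21/20 : ℝ)
  linarith [explog]




structure Facts (t : ℝ) : Prop where
  ht : 20 ≤ t
  hlog : 2 < Real.log t
  hllog : 21/20 ≤ Real.log (Real.log t)

lemma facts {t : ℝ} (ht : 20 ≤ t) : Facts t := by
  have h0 : (0:ℝ) < 20 := by norm_num
  have hl : Real.log 20 ≤ Real.log t := Real.log_le_log h0 ht
  have hlog : 2 < Real.log t := lt_of_lt_of_le log20_gt2 hl
  have hll : Real.log (Real.log 20) ≤ Real.log (Real.log t) :=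
    Real.log_le_log (by linarith [log20_gt2]) hl
  exact ⟨ht, hlog, le_trans llog20 hll⟩

lemma Facts.tpos {t : ℝ} (h : Facts t) : 0 < t := by linarith [h.ht]
lemma Facts.lpos {t : ℝ} (h : Facts t) : 0 < Real.log t := by linarith [h.hlog]
lemma Facts.llpos {t : ℝ} (h : Facts t) : 0 < Real.log (Real.log t) := by linarith [h.hllog]

lemma contAt1 {t : ℝ} (h : Facts t) :
    ContinuousAt (fun s : ℝ => (s * Real.log s * (Real.log (Real.log s))^2)⁻¹) t := by
  have h1 : ContinuousAt Real.log t := Real.continuousAt_log h.tpos.ne'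
  have h2 : ContinuousAt (fun s : ℝ => Real.log (Real.log s)) t :=
    (Real.continuousAt_log h.lpos.ne').comp h1
  exact ((continuousAt_id.mul h1).mul (h2.pow 2)).inv₀
    (mul_pos (mul_pos h.tpos h.lpos) (pow_pos h.llpos 2)).ne'

lemma contAt2 {t : ℝ} (h : Facts t) :
    ContinuousAt (fun s : ℝ => (s * Real.log s * Real.log (Real.log s))⁻¹) t := by
  have h1 : ContinuousAt Real.log t := Real.continuousAt_log h.tpos.ne'
  have h2 : ContinuousAt (fun s : ℝ => Real.log (Real.log s)) t :=
    (Real.continuousAt_log h.lpos.ne').comp h1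
  exact ((continuousAt_id.mul h1).mul h2).inv₀
    (mul_pos (mul_pos h.tpos h.lpos) h.llpos).ne'

lemma deriv1 {t : ℝ} (h : Facts t) :
    HasDerivAt (fun s : ℝ => -(Real.log (Real.log s))⁻¹)
      ((t * Real.log t * (Real.log (Real.log t))^2)⁻¹) t := by
  have h1 : HasDerivAt Real.log t⁻¹ t := Real.hasDerivAt_log h.tpos.ne'
  have h2 : HasDerivAt (fun s : ℝ => Real.log (Real.log s)) ((Real.log t)⁻¹ * t⁻¹) t :=
    (Real.hasDerivAt_log h.lpos.ne').comp t h1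
  have h3 : HasDerivAt (fun s : ℝ => -(Real.log (Real.log s))⁻¹)
      (-(-((Real.log t)⁻¹ * t⁻¹) / Real.log (Real.log t) ^ 2)) t := (h2.inv h.llpos.ne').neg
  convert h3 using 1
  field_simp

lemma deriv2 {t : ℝ} (h : Facts t) :
    HasDerivAt (fun s : ℝ => Real.log (Real.log (Real.log s)))
      ((t * Real.log t * Real.log (Real.log t))⁻¹) t := by
  have h1 : HasDerivAt Real.log t⁻¹ t := Real.hasDerivAt_log h.tpos.ne'
  have h2 : HasDerivAt (fun s : ℝ => Real.log (Real.log s)) ((Real.log t)⁻¹ * t⁻¹) t :=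
    (Real.hasDerivAt_log h.lpos.ne').comp t h1
  have h3 : HasDerivAt (fun s : ℝ => Real.log (Real.log (Real.log s)))
      ((Real.log (Real.log t))⁻¹ * ((Real.log t)⁻¹ * t⁻¹)) t :=
    (Real.hasDerivAt_log h.llpos.ne').comp (h₂ := Real.log) t h2
  convert h3 using 1
  field_simp

lemma integral1 {a b : ℝ} (ha : 20 ≤ a) (hab : a ≤ b) :
    ∫ t in a..b, (t * Real.log t * (Real.log (Real.log t))^2)⁻¹
      = (Real.log (Real.log a))⁻¹ - (Real.log (Real.log b))⁻¹ := by
  have huIcc : Set.uIcc a b = Set.Icc a b := Set.uIcc_of_le hab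
  have hmem : ∀ t ∈ Set.uIcc a b, Facts t := by
    rw [huIcc]; exact fun t htt => facts (le_trans ha htt.1)
  rw [intervalIntegral.integral_eq_sub_of_hasDerivAt
    (fun t htt => deriv1 (hmem t htt)) ?_]
  · ring
  · apply ContinuousOn.intervalIntegrable
    exact fun t htt => ((contAt1 (hmem t htt)).continuousWithinAt)

lemma integral2 {a b : ℝ} (ha : 20 ≤ a) (hab : a ≤ b) :
    ∫ t in a..b, (t * Real.log t * Real.log (Real.log t))⁻¹
      = Real.log (Real.log (Real.log b)) - Real.log (Real.log (Real.log a)) := by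
  have huIcc : Set.uIcc a b = Set.Icc a b := Set.uIcc_of_le hab
  have hmem : ∀ t ∈ Set.uIcc a b, Facts t := by
    rw [huIcc]; exact fun t htt => facts (le_trans ha htt.1)
  rw [intervalIntegral.integral_eq_sub_of_hasDerivAt
    (fun t htt => deriv2 (hmem t htt)) ?_]
  apply ContinuousOn.intervalIntegrable
  exact fun t htt => ((contAt2 (hmem t htt)).continuousWithinAt)

lemma anti1 : ∀ N : ℕ, AntitoneOn (fun t : ℝ => (t * Real.log t * (Real.log (Real.log t))^2)⁻¹)
    (Set.Icc 20 (20 + N)) := by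
  intro N s hs t htt hst
  have hfs := facts hs.1
  have hft := facts htt.1
  have h1 : Real.log s ≤ Real.log t := Real.log_le_log hfs.tpos hst
  have h2 : Real.log (Real.log s) ≤ Real.log (Real.log t) := Real.log_le_log hfs.lpos h1
  apply inv_anti₀
  · exact mul_pos (mul_pos hfs.tpos hfs.lpos) (pow_pos hfs.llpos 2)
  · apply mul_le_mul (mul_le_mul hst h1 hfs.lpos.le (by linarith [hft.tpos]))
      (pow_le_pow_left₀ hfs.llpos.le h2 2) (pow_nonneg hfs.llpos.le 2)
      (mul_nonneg hft.tpos.le hft.lpos.le)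

lemma anti2 (x₀ : ℝ) (hx₀ : 20 ≤ x₀) : ∀ N : ℕ,
    AntitoneOn (fun t : ℝ => (t * Real.log t * Real.log (Real.log t))⁻¹)
    (Set.Icc x₀ (x₀ + N)) := by
  intro N s hs t htt hst
  have hfs := facts (le_trans hx₀ hs.1)
  have hft := facts (le_trans hx₀ htt.1)
  have h1 : Real.log s ≤ Real.log t := Real.log_le_log hfs.tpos hst
  have h2 : Real.log (Real.log s) ≤ Real.log (Real.log t) := Real.log_le_log hfs.lpos h1
  apply inv_anti₀
  · exact mul_pos (mul_pos hfs.tpos hfs.lpos) hfs.llpos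
  · apply mul_le_mul (mul_le_mul hst h1 hfs.lpos.le (by linarith [hft.tpos]))
      h2 hfs.llpos.le (mul_nonneg hft.tpos.le hft.lpos.le)



lemma exp_tsum (θ : ℝ) : Real.exp θ = ∑' n : ℕ, θ^n / n ! := by
  rw [Real.exp_eq_exp_ℝ, NormedSpace.exp_eq_tsum_div]

lemma pow_div_fact_le_exp (θ : ℝ) (hθ : 0 ≤ θ) (x : ℕ) : θ^x / x ! ≤ Real.exp θ := by
  rw [exp_tsum]
  exact Summable.le_tsum (Real.summable_pow_div_factorial θ) x
    (fun j _ => by positivity)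

lemma summable_xpow (θ : ℝ) (hθ : 0 ≤ θ) :
    Summable (fun x : ℕ => θ^x * (x:ℝ) / x !) := by
  rw [← summable_nat_add_iff 1]
  have : (fun x : ℕ => θ^(x+1) * ((x+1:ℕ):ℝ) / (x+1)!) = fun x : ℕ => θ * (θ^x / x !) := by
    funext x
    have h1 : ((x+1)! : ℝ) = ((x+1:ℕ):ℝ) * (x ! : ℝ) := by
      rw [Nat.factorial_succ]; push_cast; ring
    rw [h1]
    have h2 : ((x+1:ℕ):ℝ) ≠ 0 := by positivity
    field_simp
    ring
  rw [this]
  exact (Real.summable_pow_div_factorial θ).mul_left θ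

lemma log_nat_le (x : ℕ) : Real.log x ≤ (x:ℝ) := by
  rcases Nat.eq_zero_or_pos x with h | h
  · simp [h]
  · have : (0:ℝ) < x := by exact_mod_cast h
    linarith [Real.log_le_sub_one_of_pos this]

lemma summable_T (θ : ℝ) (hθ : 0 ≤ θ) :
    Summable (fun x : ℕ => θ^x * Real.log x / x !) := by
  apply Summable.of_nonneg_of_le
    (fun x => div_nonneg (mul_nonneg (pow_nonneg hθ x) (Real.log_natCast_nonneg x))
      (by positivity))
    (fun x => by
      have := log_nat_le x
      have h0 : (0:ℝ) ≤ θ ^ x := pow_nonneg hθ x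
      gcongr)
    (summable_xpow θ hθ)




lemma Tlower (θ : ℝ) (hθ : 4096 ≤ θ) :
    Real.log θ / 4 * Real.exp θ ≤ ∑' x : ℕ, θ^x * Real.log x / x ! := by
  have hθ0 : (0:ℝ) < θ := by linarith
  have hθ1 : (1:ℝ) ≤ θ := by linarith
  set s := Real.sqrt θ with hs_def
  set q := Real.sqrt s with hq_def
  have hs0 : 0 ≤ s := Real.sqrt_nonneg θ
  have hsq : s^2 = θ := Real.sq_sqrt hθ0.le
  have hqq : q^2 = s := Real.sq_sqrt hs0
  have hs64 : (64:ℝ) ≤ s := by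
    rw [hs_def, show (64:ℝ) = Real.sqrt 4096 by
      rw [show (4096:ℝ) = 64^2 by norm_num, Real.sqrt_sq (by norm_num)]]
    exact Real.sqrt_le_sqrt hθ
  have hq8 : (8:ℝ) ≤ q := by
    rw [hq_def, show (8:ℝ) = Real.sqrt 64 by
      rw [show (64:ℝ) = 8^2 by norm_num, Real.sqrt_sq (by norm_num)]]
    exact Real.sqrt_le_sqrt hs64
  set K := ⌈s⌉₊ with hK_def
  have hKs : s ≤ (K:ℝ) := Nat.le_ceil s
  have hK1 : (K:ℝ) ≤ s + 1 := (Nat.ceil_lt_add_one hs0).le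
  have hKpos : 0 < (K:ℝ) := by linarith
  have hlogθ : Real.log θ = 4 * Real.log q := by
    rw [← hsq, Real.log_pow, ← hqq, Real.log_pow]; push_cast; ring
  have hlogq : Real.log q ≤ q - 1 := Real.log_le_sub_one_of_pos (by linarith)
  have hlogθ0 : 0 ≤ Real.log θ := Real.log_nonneg hθ1
  -- head bound
  have head_le : ∑ x ∈ Finset.range K, θ^x / x ! ≤ Real.exp θ / 2 := by
    have h1 : ∑ x ∈ Finset.range K, θ^x / x ! ≤ (K:ℝ) * θ^K := by
      calc ∑ x ∈ Finset.range K, θ^x / x ! ≤ ∑ x ∈ Finset.range K, θ^K := by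
            apply Finset.sum_le_sum
            intro x hx
            have hx' : x ≤ K := (Finset.mem_range.1 hx).le
            calc θ^x / x ! ≤ θ^x / 1 := by
                  apply div_le_div_of_nonneg_left (pow_nonneg hθ0.le x) one_pos
                  exact_mod_cast Nat.one_le_iff_ne_zero.2 (Nat.factorial_ne_zero x)
              _ = θ^x := by ring
              _ ≤ θ^K := pow_le_pow_right₀ hθ1 hx'
        _ = (K:ℝ) * θ^K := by
            rw [Finset.sum_const, Finset.card_range, nsmul_eq_mul]
    have h2 : (K:ℝ) * θ^K = Real.exp (Real.log K + K * Real.log θ) := by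
      rw [Real.exp_add, Real.exp_log hKpos, Real.exp_nat_mul, Real.exp_log hθ0]
    have h3 : Real.log K + K * Real.log θ ≤ θ - Real.log 2 := by
      have hlogK : Real.log K ≤ s := by
        have := Real.log_le_sub_one_of_pos hKpos
        linarith
      have hKlogθ : (K:ℝ) * Real.log θ ≤ (s+1) * (4*(q-1)) := by
        apply mul_le_mul hK1 _ hlogθ0 (by linarith)
        rw [hlogθ]; linarith
      have hlog2 : Real.log 2 ≤ 1 := by
        linarith [Real.log_le_sub_one_of_pos (show (0:ℝ) < 2 by norm_num)]
      have : s + (s+1)*(4*(q-1)) + 1 ≤ θ := by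
        rw [← hsq, ← hqq]
        nlinarith [hq8]
      linarith
    have h4 : (K:ℝ) * θ^K ≤ Real.exp θ / 2 := by
      rw [h2]
      calc Real.exp (Real.log K + K * Real.log θ) ≤ Real.exp (θ - Real.log 2) :=
            Real.exp_le_exp.2 h3
        _ = Real.exp θ / 2 := by rw [Real.exp_sub, Real.exp_log (by norm_num)]
    exact le_trans h1 h4
  -- tail of exponential series
  have hsume : Summable (fun x : ℕ => θ^x / x !) := Real.summable_pow_div_factorial θ
  have hsplit_e := Summable.sum_add_tsum_nat_add (f := fun x : ℕ => θ^x / x !) K hsume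
  have tail_e : Real.exp θ / 2 ≤ ∑' x : ℕ, θ^(x+K) / (x+K)! := by
    have : Real.exp θ = ∑ x ∈ Finset.range K, θ^x / x ! + ∑' x : ℕ, θ^(x+K) / (x+K)! := by
      rw [← exp_tsum] at hsplit_e
      exact hsplit_e.symm
    linarith
  -- tail comparison
  have hsumT := summable_T θ hθ0.le
  have hsplit_T := Summable.sum_add_tsum_nat_add (f := fun x : ℕ => θ^x * Real.log x / x !) K hsumT
  have tail_T : ∑' x : ℕ, θ^(x+K) * Real.log (↑(x+K)) / (x+K)!
      ≤ ∑' x : ℕ, θ^x * Real.log x / x ! := by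
    rw [← hsplit_T]
    have : 0 ≤ ∑ x ∈ Finset.range K, θ^x * Real.log x / x ! := by
      apply Finset.sum_nonneg
      intro x _
      exact div_nonneg (mul_nonneg (pow_nonneg hθ0.le x) (Real.log_natCast_nonneg x))
        (by positivity)
    linarith
  have comp : ∑' x : ℕ, (Real.log θ / 2) * (θ^(x+K) / (x+K)!)
      ≤ ∑' x : ℕ, θ^(x+K) * Real.log (↑(x+K)) / (x+K)! := by
    apply Summable.tsum_le_tsum _ (((summable_nat_add_iff K).2 hsume).mul_left _)
      ((summable_nat_add_iff K).2 hsumT)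
    intro x
    have hxK : s ≤ ((x+K:ℕ):ℝ) := by
      push_cast
      linarith [Nat.cast_nonneg (α := ℝ) x]
    have hlog : Real.log θ / 2 ≤ Real.log (↑(x+K)) := by
      have h1 : Real.log s ≤ Real.log (↑(x+K)) := Real.log_le_log (by linarith) hxK
      rw [hs_def] at h1
      rw [Real.log_sqrt hθ0.le] at h1
      exact h1
    calc (Real.log θ / 2) * (θ^(x+K) / (x+K)!)
        ≤ Real.log (↑(x+K)) * (θ^(x+K) / (x+K)!) := by
          apply mul_le_mul_of_nonneg_right hlog (by positivity)
      _ = θ^(x+K) * Real.log (↑(x+K)) / (x+K)! := by ring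
  have tsum_mul : ∑' x : ℕ, (Real.log θ / 2) * (θ^(x+K) / (x+K)!)
      = (Real.log θ / 2) * ∑' x : ℕ, θ^(x+K) / (x+K)! := by
    exact tsum_mul_left
  calc Real.log θ / 4 * Real.exp θ = (Real.log θ / 2) * (Real.exp θ / 2) := by ring
    _ ≤ (Real.log θ / 2) * ∑' x : ℕ, θ^(x+K) / (x+K)! := by
        apply mul_le_mul_of_nonneg_left tail_e (by linarith)
    _ = ∑' x : ℕ, (Real.log θ / 2) * (θ^(x+K) / (x+K)!) := tsum_mul.symm
    _ ≤ ∑' x : ℕ, θ^(x+K) * Real.log (↑(x+K)) / (x+K)! := comp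
    _ ≤ ∑' x : ℕ, θ^x * Real.log x / x ! := tail_T




lemma int_exp_neg (a b : ℝ) : ∫ u in a..b, Real.exp (-u) = Real.exp (-a) - Real.exp (-b) := by
  rw [show (∫ u in a..b, Real.exp (-u)) = ∫ u in -b..-a, Real.exp u from
    intervalIntegral.integral_comp_neg fun u => Real.exp u]
  rw [integral_exp]

lemma int_le_gamma (x : ℕ) (hx : 1 ≤ x) {a b : ℝ} (ha : 0 < a) (hab : a ≤ b) :
    ∫ u in a..b, u^(x-1) * Real.exp (-u) ≤ (x-1)! := by
  have hxr : (0:ℝ) < (x:ℝ) := by exact_mod_cast hx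
  have hcast : ((x-1:ℕ):ℝ) = (x:ℝ) - 1 := by
    have : (1:ℕ) ≤ x := hx
    push_cast [this]
    ring
  have hΓ : ((x-1)! : ℝ) = Real.Gamma x := by
    have := Real.Gamma_nat_eq_factorial (x-1)
    rw [hcast] at this
    rw [← this]
    norm_num
  rw [hΓ, Real.Gamma_eq_integral hxr]
  rw [intervalIntegral.integral_of_le hab]
  have hsub : Set.Ioc a b ⊆ Set.Ioi (0:ℝ) := fun u hu => lt_of_lt_of_le ha hu.1.le
  have hcongr : ∫ u in Set.Ioc a b, u^(x-1) * Real.exp (-u)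
      = ∫ u in Set.Ioc a b, Real.exp (-u) * u ^ ((x:ℝ)-1) := by
    apply setIntegral_congr_fun measurableSet_Ioc
    intro u hu
    show u^(x-1) * Real.exp (-u) = Real.exp (-u) * u ^ ((x:ℝ)-1)
    have : u ^ ((x:ℝ)-1) = u^(x-1) := by
      rw [← hcast, Real.rpow_natCast]
    rw [this]; ring
  rw [hcongr]
  apply setIntegral_mono_set (Real.GammaIntegral_convergent hxr)
  · filter_upwards [ae_restrict_mem measurableSet_Ioi] with u hu
    have hu0 : (0:ℝ) < u := hu
    positivity
  · exact HasSubset.Subset.eventuallyLE hsub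

lemma term_bound {c : ℝ} (hc : 0 < c) (x : ℕ) (hx : 1 ≤ x) (n : ℕ) (hn : 20 ≤ n) :
    c / (n * Real.log n * (Real.log (Real.log n))^2) * (Real.log n)^x
        * Real.exp (-(Real.log n)) / x !
      ≤ c * (21/20) / ((Real.log (Real.log 20))^2 * x !)
        * ∫ u in Real.log n..Real.log ((n:ℝ)+1), u^(x-1) * Real.exp (-u) := by
  have hnr : (20:ℝ) ≤ (n:ℝ) := by exact_mod_cast hn
  have hf := facts hnr
  have hf1 := facts (le_trans hnr (by linarith : (n:ℝ) ≤ (n:ℝ)+1))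
  set θ := Real.log (n:ℝ) with hθdef
  set θ' := Real.log ((n:ℝ)+1) with hθ'def
  have hθθ' : θ ≤ θ' := Real.log_le_log hf.tpos (by linarith)
  have hexpθ : Real.exp (-θ) = (n:ℝ)⁻¹ := by
    rw [Real.exp_neg, Real.exp_log hf.tpos]
  have hexpθ' : Real.exp (-θ') = ((n:ℝ)+1)⁻¹ := by
    rw [Real.exp_neg, Real.exp_log hf1.tpos]
  have hL20 : (21/20 : ℝ) ≤ Real.log (Real.log 20) := llog20
  have hL20pos : (0:ℝ) < Real.log (Real.log 20) := by linarith
  -- inner integral lower bound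
  have hint : θ^(x-1) * ((n:ℝ)⁻¹ - ((n:ℝ)+1)⁻¹)
      ≤ ∫ u in θ..θ', u^(x-1) * Real.exp (-u) := by
    have h1 : ∫ u in θ..θ', θ^(x-1) * Real.exp (-u)
        = θ^(x-1) * ((n:ℝ)⁻¹ - ((n:ℝ)+1)⁻¹) := by
      rw [intervalIntegral.integral_const_mul, int_exp_neg, hexpθ, hexpθ']
    rw [← h1]
    have cont1 : Continuous fun u : ℝ => θ^(x-1) * Real.exp (-u) :=
      continuous_const.mul (Real.continuous_exp.comp continuous_neg)
    have cont2 : Continuous fun u : ℝ => u^(x-1) * Real.exp (-u) :=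
      (continuous_pow _).mul (Real.continuous_exp.comp continuous_neg)
    apply intervalIntegral.integral_mono_on hθθ'
    · exact cont1.intervalIntegrable _ _
    · exact cont2.intervalIntegrable _ _
    · intro u hu
      have h2 : θ ≤ u := hu.1
      have h3 : (0:ℝ) ≤ θ := hf.lpos.le
      exact mul_le_mul_of_nonneg_right (pow_le_pow_left₀ h3 h2 (x-1)) (Real.exp_pos _).le
  -- algebra
  set L := Real.log (Real.log (n:ℝ)) with hLdef
  have hn0 : ((n:ℝ)) ≠ 0 := hf.tpos.ne'
  have hθ0 : θ ≠ 0 := hf.lpos.ne'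
  have hL0 : L ≠ 0 := hf.llpos.ne'
  have hx0 : ((x ! : ℕ):ℝ) ≠ 0 := by positivity
  have hLL : Real.log (Real.log 20) ≤ L := by
    calc Real.log (Real.log 20) ≤ Real.log (Real.log (n:ℝ)) := by
          apply Real.log_le_log (by linarith [log20_gt2])
          exact Real.log_le_log (by norm_num) hnr
      _ = L := rfl
  set L20 := Real.log (Real.log 20) with hL20def
  have el : c / ((n:ℝ) * θ * L^2) * θ^x * Real.exp (-θ) / x !
      = c * θ^(x-1) / ((n:ℝ)^2 * L^2 * x !) := by
    rw [hexpθ]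
    have hpow : θ^x = θ^(x-1) * θ := by
      rw [← pow_succ]
      congr 1
      omega
    rw [hpow]
    field_simp
  have key : ((n:ℝ)*(n:ℝ))⁻¹ ≤ 21/20 * ((n:ℝ)⁻¹ - ((n:ℝ)+1)⁻¹) := by
    have e : 21/20 * ((n:ℝ)⁻¹ - ((n:ℝ)+1)⁻¹) - ((n:ℝ)*(n:ℝ))⁻¹
        = ((n:ℝ) - 20)/(20 * (n:ℝ)^2 * ((n:ℝ)+1)) := by
      field_simp
      ring
    have : (0:ℝ) ≤ ((n:ℝ) - 20)/(20 * (n:ℝ)^2 * ((n:ℝ)+1)) := by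
      apply div_nonneg (by linarith)
      positivity
    linarith [e ▸ this]
  have hfrac0 : (0:ℝ) ≤ c * θ^(x-1) / (L20^2 * x !) := by positivity
  have mid : c * θ^(x-1) / ((n:ℝ)^2 * L20^2 * x !)
      = (c * θ^(x-1) / (L20^2 * x !)) * ((n:ℝ)*(n:ℝ))⁻¹ := by
    field_simp
  have mid2 : c * (21/20) / (L20^2 * x !) * (θ^(x-1) * ((n:ℝ)⁻¹ - ((n:ℝ)+1)⁻¹))
      = (c * θ^(x-1) / (L20^2 * x !)) * (21/20 * ((n:ℝ)⁻¹ - ((n:ℝ)+1)⁻¹)) := by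
    field_simp
  calc c / ((n:ℝ) * θ * L^2) * θ^x * Real.exp (-θ) / x !
      = c * θ^(x-1) / ((n:ℝ)^2 * L^2 * x !) := el
    _ ≤ c * θ^(x-1) / ((n:ℝ)^2 * L20^2 * x !) := by
        have h1 : L20^2 ≤ L^2 := by nlinarith [hLL, hL20pos]
        have h2 : (0:ℝ) < (n:ℝ)^2 := by positivity
        have h3 : (0:ℝ) < ((x ! : ℕ):ℝ) := by positivity
        apply div_le_div_of_nonneg_left (by positivity)
        · positivity
        · exact mul_le_mul_of_nonneg_right
            (mul_le_mul_of_nonneg_left h1 h2.le) h3.le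
    _ = (c * θ^(x-1) / (L20^2 * x !)) * ((n:ℝ)*(n:ℝ))⁻¹ := mid
    _ ≤ (c * θ^(x-1) / (L20^2 * x !)) * (21/20 * ((n:ℝ)⁻¹ - ((n:ℝ)+1)⁻¹)) :=
        mul_le_mul_of_nonneg_left key hfrac0
    _ = c * (21/20) / (L20^2 * x !) * (θ^(x-1) * ((n:ℝ)⁻¹ - ((n:ℝ)+1)⁻¹)) := mid2.symm
    _ ≤ c * (21/20) / (L20^2 * x !) * ∫ u in θ..θ', u^(x-1) * Real.exp (-u) := by
        apply mul_le_mul_of_nonneg_left hint (by positivity)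


end PMIKL

open MeasureTheory Filter

open PMIKL Real Nat in
/-- For the Poisson mixture with mixing distribution putting mass
`c{n(log n)(log log n)²}⁻¹` at `log n` for `n ≥ 20`, the mixture probability
mass function satisfies `f(x;G*) ≤ 1/x` for all `x ≥ 1` and consequently
`E*[log f(X;G*)] = −∞`. -/
theorem poisson_mixture_infinite_KL
    (c : ℝ) (hc : 0 < c)
    (w : ℕ → ℝ)
    (hw : ∀ n : ℕ, w n =
      if 20 ≤ n then c / (n * Real.log n * (Real.log (Real.log n)) ^ 2) else 0)
    -- `c` is a normalizing constant
    (hnorm : ∑' n : ℕ, w n = 1)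
    (p : ℕ → ℝ)
    (hp : ∀ x : ℕ, p x = ∑' n : ℕ,
      w n * (Real.log n) ^ x * Real.exp (-(Real.log n)) / (Nat.factorial x)) :
    (∀ x : ℕ, 1 ≤ x → p x ≤ 1 / x) ∧
    Tendsto (fun N => ∑ x ∈ Finset.range N, p x * Real.log (p x))
      atTop atBot := by
  classical
  have hL20 : (21/20:ℝ) ≤ Real.log (Real.log 20) := llog20
  set L20 := Real.log (Real.log 20) with hL20def
  have hL20pos : (0:ℝ) < L20 := by linarith
  have hwnn : ∀ n : ℕ, 0 ≤ w n := by
    intro n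
    rw [hw n]
    split_ifs with h
    · have hf := facts (show (20:ℝ) ≤ (n:ℝ) by exact_mod_cast h)
      exact (div_pos hc (mul_pos (mul_pos hf.tpos hf.lpos) (pow_pos hf.llpos 2))).le
    · exact le_refl _
  have hsumw : Summable w := by
    by_contra h
    rw [tsum_eq_zero_of_not_summable h] at hnorm
    norm_num at hnorm
  have hpartial : ∀ s : Finset ℕ, ∑ n ∈ s, w n ≤ 1 := by
    intro s
    rw [← hnorm]
    exact Summable.sum_le_tsum s (fun i _ => hwnn i) hsumw
  -- c ≤ L20
  have hcL : c ≤ L20 := by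
    have key : ∀ N : ℕ, c * (L20⁻¹ - (Real.log (Real.log (20+(N:ℝ))))⁻¹) ≤ 1 := by
      intro N
      have hanti := (anti1 N).integral_le_sum
      rw [integral1 (le_refl (20:ℝ))
        (by linarith [Nat.cast_nonneg (α:=ℝ) N] : (20:ℝ) ≤ 20 + (N:ℝ))] at hanti
      have hterm : ∀ i : ℕ,
          c * ((20+(i:ℝ)) * Real.log (20+(i:ℝ)) * (Real.log (Real.log (20+(i:ℝ))))^2)⁻¹
            = w (20+i) := by
        intro i
        rw [hw (20+i), if_pos (by omega)]
        push_cast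
        rw [div_eq_mul_inv]
      calc c * (L20⁻¹ - (Real.log (Real.log (20+(N:ℝ))))⁻¹)
          ≤ c * ∑ i ∈ Finset.range N,
              ((20+(i:ℝ)) * Real.log (20+(i:ℝ)) * (Real.log (Real.log (20+(i:ℝ))))^2)⁻¹ :=
            mul_le_mul_of_nonneg_left hanti hc.le
        _ = ∑ i ∈ Finset.range N, w (20+i) := by
            rw [Finset.mul_sum]
            exact Finset.sum_congr rfl fun i _ => hterm i
        _ = ∑ n ∈ Finset.Ico 20 (20+N), w n := by
            rw [Finset.sum_Ico_eq_sum_range]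
            simp
        _ ≤ 1 := hpartial _
    have htend : Tendsto (fun N : ℕ => c * (L20⁻¹ - (Real.log (Real.log (20+(N:ℝ))))⁻¹)) atTop
        (nhds (c * (L20⁻¹ - 0))) := by
      apply Tendsto.const_mul
      apply Tendsto.const_sub
      apply Filter.Tendsto.inv_tendsto_atTop
      apply Real.tendsto_log_atTop.comp
      apply Real.tendsto_log_atTop.comp
      exact tendsto_atTop_add_const_left atTop 20 tendsto_natCast_atTop_atTop
    have hle := le_of_tendsto htend (Filter.Eventually.of_forall key)
    rw [sub_zero] at hle
    have h2 : c * L20⁻¹ * L20 ≤ 1 * L20 := mul_le_mul_of_nonneg_right hle hL20pos.le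
    rwa [mul_assoc, inv_mul_cancel₀ hL20pos.ne', mul_one, one_mul] at h2
  -- basic facts about the summand
  have hFnn : ∀ x n : ℕ,
      0 ≤ w n * (Real.log n)^x * Real.exp (-(Real.log n)) / (Nat.factorial x) := by
    intro x n
    apply div_nonneg _ (by positivity)
    exact mul_nonneg (mul_nonneg (hwnn n) (pow_nonneg (Real.log_natCast_nonneg n) x))
      (Real.exp_pos _).le
  have hpmf : ∀ x n : ℕ, (Real.log n)^x * Real.exp (-(Real.log n)) / (Nat.factorial x) ≤ 1 := by
    intro x n
    have hθ : (0:ℝ) ≤ Real.log n := Real.log_natCast_nonneg n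
    have h2 : (0:ℝ) < Real.exp (Real.log n) := Real.exp_pos _
    have h1 := pow_div_fact_le_exp (Real.log n) hθ x
    rw [Real.exp_neg]
    calc (Real.log n)^x * (Real.exp (Real.log n))⁻¹ / (Nat.factorial x)
        = ((Real.log n)^x / (Nat.factorial x)) * (Real.exp (Real.log n))⁻¹ := by ring
      _ ≤ Real.exp (Real.log n) * (Real.exp (Real.log n))⁻¹ :=
          mul_le_mul_of_nonneg_right h1 (inv_nonneg.2 h2.le)
      _ = 1 := mul_inv_cancel₀ h2.ne'
  have hFle : ∀ x n : ℕ,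
      w n * (Real.log n)^x * Real.exp (-(Real.log n)) / (Nat.factorial x) ≤ w n := by
    intro x n
    calc w n * (Real.log n)^x * Real.exp (-(Real.log n)) / (Nat.factorial x)
        = w n * ((Real.log n)^x * Real.exp (-(Real.log n)) / (Nat.factorial x)) := by ring
      _ ≤ w n * 1 := mul_le_mul_of_nonneg_left (hpmf x n) (hwnn n)
      _ = w n := mul_one _
  have hsumF : ∀ x : ℕ,
      Summable (fun n => w n * (Real.log n)^x * Real.exp (-(Real.log n)) / (Nat.factorial x)) :=
    fun x => Summable.of_nonneg_of_le (hFnn x) (hFle x) hsumw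
  -- PART 1
  have hth : ∀ x : ℕ, 1 ≤ x → p x ≤ 1/x := by
    intro x hx
    have hxr : (0:ℝ) < x := by exact_mod_cast hx
    have hbound : ∀ N : ℕ,
        ∑ n ∈ Finset.range N, w n * (Real.log n)^x * Real.exp (-(Real.log n)) / (Nat.factorial x)
          ≤ c * (21/20) / (L20^2 * (Nat.factorial x)) * ((Nat.factorial (x-1) : ℕ) : ℝ) := by
      intro N
      set a : ℕ → ℝ := fun i => Real.log (20+(i:ℝ)) with ha
      have hsub : ∑ n ∈ Finset.range N,
            w n * (Real.log n)^x * Real.exp (-(Real.log n)) / (Nat.factorial x)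
          ≤ ∑ n ∈ Finset.range (20+N),
            w n * (Real.log n)^x * Real.exp (-(Real.log n)) / (Nat.factorial x) :=
        Finset.sum_le_sum_of_subset_of_nonneg (Finset.range_subset_range.2 (by omega))
          (fun i _ _ => hFnn x i)
      have hIco : ∑ n ∈ Finset.range (20+N),
            w n * (Real.log n)^x * Real.exp (-(Real.log n)) / (Nat.factorial x)
          = ∑ i ∈ Finset.range N,
            w (20+i) * (Real.log (20+i:ℕ))^x * Real.exp (-(Real.log (20+i:ℕ))) / (Nat.factorial x) := by
        have h1 : ∑ n ∈ Finset.range (20+N),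
              w n * (Real.log n)^x * Real.exp (-(Real.log n)) / (Nat.factorial x)
            = ∑ n ∈ Finset.Ico 20 (20+N),
              w n * (Real.log n)^x * Real.exp (-(Real.log n)) / (Nat.factorial x) := by
          apply (Finset.sum_subset ?_ ?_).symm
          · intro k hk
            rw [Finset.mem_range]
            exact (Finset.mem_Ico.1 hk).2
          · intro n hn hn2
            have h20 : ¬ (20 ≤ n) := by
              rw [Finset.mem_range] at hn
              rw [Finset.mem_Ico] at hn2
              omega
            rw [hw n, if_neg h20]
            simp
        rw [h1, Finset.sum_Ico_eq_sum_range]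
        simp
      have hterm : ∀ i : ℕ,
          w (20+i) * (Real.log (20+i:ℕ))^x * Real.exp (-(Real.log (20+i:ℕ))) / (Nat.factorial x)
            ≤ c * (21/20) / (L20^2 * (Nat.factorial x))
              * ∫ u in a i..a (i+1), u^(x-1) * Real.exp (-u) := by
        intro i
        have h := term_bound (c:=c) hc x hx (20+i) (by omega)
        have e1 : ((20+i:ℕ):ℝ) = 20+(i:ℝ) := by push_cast; ring
        have e2 : (20+(i:ℝ))+1 = 20+((i+1:ℕ):ℝ) := by push_cast; ring
        rw [e1, e2] at h
        rw [hw (20+i), if_pos (by omega), e1]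
        exact h
      have hint : ∀ k : ℕ, k < N →
          IntervalIntegrable (fun u => u^(x-1) * Real.exp (-u)) volume (a k) (a (k+1)) :=
        fun k _ => ((continuous_pow _).mul
          (Real.continuous_exp.comp continuous_neg)).intervalIntegrable _ _
      have ha0 : (0:ℝ) < a 0 := by
        have : a 0 = Real.log 20 := by simp [ha]
        rw [this]
        linarith [log20_gt2]
      have haN : a 0 ≤ a N := by
        apply Real.log_le_log (by norm_num)
        have : (0:ℝ) ≤ (N:ℝ) := Nat.cast_nonneg N
        simp only [Nat.cast_zero]
        linarith
      have hgam := int_le_gamma x hx ha0 haN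
      calc ∑ n ∈ Finset.range N,
            w n * (Real.log n)^x * Real.exp (-(Real.log n)) / (Nat.factorial x)
          ≤ ∑ n ∈ Finset.range (20+N),
            w n * (Real.log n)^x * Real.exp (-(Real.log n)) / (Nat.factorial x) := hsub
        _ = ∑ i ∈ Finset.range N,
            w (20+i) * (Real.log (20+i:ℕ))^x * Real.exp (-(Real.log (20+i:ℕ))) / (Nat.factorial x) := hIco
        _ ≤ ∑ i ∈ Finset.range N, c * (21/20) / (L20^2 * (Nat.factorial x))
              * ∫ u in a i..a (i+1), u^(x-1) * Real.exp (-u) :=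
            Finset.sum_le_sum (fun i _ => hterm i)
        _ = c * (21/20) / (L20^2 * (Nat.factorial x))
              * ∑ i ∈ Finset.range N, ∫ u in a i..a (i+1), u^(x-1) * Real.exp (-u) := by
            rw [Finset.mul_sum]
        _ = c * (21/20) / (L20^2 * (Nat.factorial x))
              * ∫ u in (a 0)..(a N), u^(x-1) * Real.exp (-u) := by
            rw [intervalIntegral.sum_integral_adjacent_intervals hint]
        _ ≤ c * (21/20) / (L20^2 * (Nat.factorial x)) * ((Nat.factorial (x-1) : ℕ) : ℝ) := by
            apply mul_le_mul_of_nonneg_left hgam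
            positivity
    have hts : p x ≤ c * (21/20) / (L20^2 * (Nat.factorial x)) * ((Nat.factorial (x-1) : ℕ) : ℝ) := by
      rw [hp x]
      exact Real.tsum_le_of_sum_range_le (hFnn x) hbound
    refine le_trans hts ?_
    have hfact : ((Nat.factorial x : ℕ) : ℝ) = (x:ℝ) * ((Nat.factorial (x-1) : ℕ) : ℝ) := by
      exact_mod_cast (Nat.mul_factorial_pred (by omega)).symm
    have hfp : (0:ℝ) < ((Nat.factorial (x-1) : ℕ) : ℝ) := by
      exact_mod_cast (x-1).factorial_pos
    have h21 : c * (21/20) ≤ L20^2 := by nlinarith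
    rw [hfact, div_mul_eq_mul_div, div_le_div_iff₀ (by positivity) hxr]
    nlinarith [mul_le_mul_of_nonneg_right h21 (mul_pos hxr hfp).le]
  -- positivity of p
  have hf20 : PMIKL.Facts ((20:ℕ):ℝ) := facts (by norm_num)
  have hppos : ∀ x : ℕ, 0 < p x := by
    intro x
    rw [hp x]
    apply Summable.tsum_pos (hsumF x) (hFnn x) 20
    have hw20 : 0 < w 20 := by
      rw [hw 20, if_pos (le_refl 20)]
      exact div_pos hc (mul_pos (mul_pos hf20.tpos hf20.lpos) (pow_pos hf20.llpos 2))
    apply _root_.div_pos _ (by exact_mod_cast x.factorial_pos)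
    exact mul_pos (mul_pos hw20 (pow_pos hf20.lpos x)) (Real.exp_pos _)
  -- PART 2 : divergence of A
  set A : ℕ → ℝ := fun N => ∑ x ∈ Finset.range N, p x * Real.log x with hA
  have hAmono : Monotone A := by
    intro M N h
    apply Finset.sum_le_sum_of_subset_of_nonneg (Finset.range_subset_range.2 h)
    intro i _ _
    exact mul_nonneg (hppos i).le (Real.log_natCast_nonneg i)
  set N₀ : ℕ := max 20 (⌈Real.exp 4096⌉₊ + 1) with hN₀
  have hN₀20 : 20 ≤ N₀ := le_max_left _ _
  have hN₀log : ∀ n : ℕ, N₀ ≤ n → 4096 ≤ Real.log n := by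
    intro n hn
    have h2 : (⌈Real.exp 4096⌉₊ + 1 : ℕ) ≤ n := le_trans (le_max_right _ _) hn
    have h3 : Real.exp 4096 ≤ (⌈Real.exp 4096⌉₊ : ℝ) := Nat.le_ceil _
    have h4 : ((⌈Real.exp 4096⌉₊ + 1 : ℕ) : ℝ) ≤ (n:ℝ) := by exact_mod_cast h2
    push_cast at h4
    calc (4096:ℝ) = Real.log (Real.exp 4096) := (Real.log_exp _).symm
      _ ≤ Real.log n := Real.log_le_log (Real.exp_pos _) (by linarith)
  have hAdiv : Tendsto A atTop atTop := by
    apply tendsto_atTop_atTop_of_monotone hAmono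
    intro b
    have h0 : Tendsto (fun M : ℕ => Real.log (Real.log (Real.log ((N₀:ℝ)+(M:ℝ))))) atTop atTop := by
      apply Real.tendsto_log_atTop.comp
      apply Real.tendsto_log_atTop.comp
      apply Real.tendsto_log_atTop.comp
      exact tendsto_atTop_add_const_left atTop _ tendsto_natCast_atTop_atTop
    have htendM : Tendsto (fun M : ℕ => c/4 *
        (Real.log (Real.log (Real.log ((N₀:ℝ)+(M:ℝ)))) - Real.log (Real.log (Real.log (N₀:ℝ)))))
        atTop atTop := by
      apply Tendsto.const_mul_atTop (by linarith : (0:ℝ) < c/4)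
      simp only [sub_eq_add_neg]
      exact tendsto_atTop_add_const_right atTop _ h0
    obtain ⟨M, hM⟩ := (htendM.eventually_ge_atTop (b+1)).exists
    have hwin : ∀ n ∈ Finset.Ico N₀ (N₀ + M),
        c/4 * ((n:ℝ) * Real.log n * Real.log (Real.log n))⁻¹
          ≤ (w n * Real.exp (-(Real.log n)))
            * ∑' x : ℕ, (Real.log n)^x * Real.log x / (Nat.factorial x) := by
      intro n hn
      have hnN₀ : N₀ ≤ n := (Finset.mem_Ico.1 hn).1
      have hn20 : 20 ≤ n := le_trans hN₀20 hnN₀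
      have hθ : 4096 ≤ Real.log n := hN₀log n hnN₀
      have hfn : PMIKL.Facts (n:ℝ) := facts (by exact_mod_cast hn20)
      have hT := Tlower (Real.log n) hθ
      have hge : (w n * Real.exp (-(Real.log n)))
            * (Real.log (Real.log n) / 4 * Real.exp (Real.log n))
          ≤ (w n * Real.exp (-(Real.log n)))
            * ∑' x : ℕ, (Real.log n)^x * Real.log x / (Nat.factorial x) :=
        mul_le_mul_of_nonneg_left hT (mul_nonneg (hwnn n) (Real.exp_pos _).le)
      refine le_trans (le_of_eq ?_) hge
      rw [hw n, if_pos hn20, Real.exp_neg]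
      have h1 : ((n:ℝ)) ≠ 0 := hfn.tpos.ne'
      have h2 : Real.log (n:ℝ) ≠ 0 := hfn.lpos.ne'
      have h3 : Real.log (Real.log (n:ℝ)) ≠ 0 := hfn.llpos.ne'
      have h4 : Real.exp (Real.log (n:ℝ)) ≠ 0 := (Real.exp_pos _).ne'
      rw [Real.exp_log hfn.tpos]
      field_simp
    have hintlow : (c/4) * (Real.log (Real.log (Real.log ((N₀:ℝ)+(M:ℝ))))
          - Real.log (Real.log (Real.log (N₀:ℝ))))
        ≤ ∑ n ∈ Finset.Ico N₀ (N₀+M),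
            c/4 * ((n:ℝ) * Real.log n * Real.log (Real.log n))⁻¹ := by
      have hanti := (anti2 (N₀:ℝ) (by exact_mod_cast hN₀20) M).integral_le_sum
      rw [integral2 (by exact_mod_cast hN₀20)
        (by linarith [Nat.cast_nonneg (α:=ℝ) M] : (N₀:ℝ) ≤ (N₀:ℝ) + (M:ℝ))] at hanti
      calc (c/4) * (Real.log (Real.log (Real.log ((N₀:ℝ)+(M:ℝ))))
              - Real.log (Real.log (Real.log (N₀:ℝ))))
          ≤ (c/4) * ∑ i ∈ Finset.range M,
              (((N₀:ℝ)+(i:ℝ)) * Real.log ((N₀:ℝ)+(i:ℝ)) * Real.log (Real.log ((N₀:ℝ)+(i:ℝ))))⁻¹ :=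
            mul_le_mul_of_nonneg_left hanti (by linarith)
        _ = ∑ n ∈ Finset.Ico N₀ (N₀+M),
              c/4 * ((n:ℝ) * Real.log n * Real.log (Real.log n))⁻¹ := by
            rw [Finset.sum_Ico_eq_sum_range, Nat.add_sub_cancel_left, Finset.mul_sum]
            apply Finset.sum_congr rfl
            intro i _
            push_cast
            ring
    have hchain : b+1 ≤ ∑ n ∈ Finset.Ico N₀ (N₀+M), (w n * Real.exp (-(Real.log n)))
        * ∑' x : ℕ, (Real.log n)^x * Real.log x / (Nat.factorial x) :=
      le_trans hM (le_trans hintlow (Finset.sum_le_sum hwin))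
    have htpartial : Tendsto (fun N : ℕ => ∑ n ∈ Finset.Ico N₀ (N₀+M),
          (w n * Real.exp (-(Real.log n)))
          * ∑ x ∈ Finset.range N, (Real.log n)^x * Real.log x / (Nat.factorial x)) atTop
        (nhds (∑ n ∈ Finset.Ico N₀ (N₀+M), (w n * Real.exp (-(Real.log n)))
          * ∑' x : ℕ, (Real.log n)^x * Real.log x / (Nat.factorial x))) := by
      apply tendsto_finset_sum
      intro n _
      exact ((summable_T (Real.log n) (Real.log_natCast_nonneg n)).hasSum.tendsto_sum_nat).const_mul _
    have hev := htpartial.eventually (eventually_ge_nhds (show b < _ by linarith))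
    obtain ⟨N, hN⟩ := hev.exists
    refine ⟨N, le_trans hN ?_⟩
    have e1 : ∀ n : ℕ, (w n * Real.exp (-(Real.log n)))
          * ∑ x ∈ Finset.range N, (Real.log n)^x * Real.log x / (Nat.factorial x)
        = ∑ x ∈ Finset.range N,
          (w n * (Real.log n)^x * Real.exp (-(Real.log n)) / (Nat.factorial x)) * Real.log x := by
      intro n
      rw [Finset.mul_sum]
      apply Finset.sum_congr rfl
      intro x _
      ring
    calc ∑ n ∈ Finset.Ico N₀ (N₀+M), (w n * Real.exp (-(Real.log n)))
          * ∑ x ∈ Finset.range N, (Real.log n)^x * Real.log x / (Nat.factorial x)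
        = ∑ n ∈ Finset.Ico N₀ (N₀+M), ∑ x ∈ Finset.range N,
            (w n * (Real.log n)^x * Real.exp (-(Real.log n)) / (Nat.factorial x)) * Real.log x :=
          Finset.sum_congr rfl (fun n _ => e1 n)
      _ = ∑ x ∈ Finset.range N, ∑ n ∈ Finset.Ico N₀ (N₀+M),
            (w n * (Real.log n)^x * Real.exp (-(Real.log n)) / (Nat.factorial x)) * Real.log x :=
          Finset.sum_comm
      _ ≤ A N := by
          apply Finset.sum_le_sum
          intro x _
          rw [← Finset.sum_mul]
          apply mul_le_mul_of_nonneg_right _ (Real.log_natCast_nonneg x)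
          rw [hp x]
          exact Summable.sum_le_tsum _ (fun i _ => hFnn x i) (hsumF x)
  -- conclude
  set C0 := |p 0 * Real.log (p 0)| with hC0
  have hBA : ∀ N : ℕ, ∑ x ∈ Finset.range N, p x * Real.log (p x) ≤ C0 - A N := by
    intro N
    have hterm : ∀ x : ℕ, p x * Real.log (p x) + p x * Real.log x
        ≤ (if x = 0 then C0 else 0) := by
      intro x
      rcases Nat.eq_zero_or_pos x with h0 | h1
      · subst h0
        rw [if_pos rfl, Nat.cast_zero, Real.log_zero, mul_zero, add_zero]
        exact le_abs_self _
      · rw [if_neg (by omega)]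
        have hxr : (0:ℝ) < (x:ℝ) := by exact_mod_cast h1
        have hlt : Real.log (p x) ≤ -Real.log x := by
          have h2 := Real.log_le_log (hppos x) (hth x h1)
          rwa [one_div, Real.log_inv] at h2
        nlinarith [mul_le_mul_of_nonneg_left hlt (hppos x).le]
    have hsum := Finset.sum_le_sum (fun x (_ : x ∈ Finset.range N) => hterm x)
    have hite : ∑ x ∈ Finset.range N, (if x = 0 then C0 else 0) ≤ C0 := by
      rw [Finset.sum_ite_eq' (Finset.range N) 0 (fun _ => C0)]
      split_ifs
      · exact le_refl _
      · exact abs_nonneg _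
    have hsplit : ∑ x ∈ Finset.range N, (p x * Real.log (p x) + p x * Real.log x)
        = (∑ x ∈ Finset.range N, p x * Real.log (p x)) + A N := by
      rw [Finset.sum_add_distrib]
    rw [hsplit] at hsum
    linarith
  have hdown : Tendsto (fun N => C0 - A N) atTop atBot := by
    have h1 : Tendsto (fun N => -A N) atTop atBot := tendsto_neg_atTop_atBot.comp hAdiv
    have h2 := tendsto_atBot_add_const_left atTop C0 h1
    simpa [sub_eq_add_neg] using h2
  exact ⟨hth, tendsto_atBot_mono hBA hdown⟩
end

section
/- Let x₁, …, x_n be i.i.d. from an absolutely continuous distribution F with continuous density f bounded by M, and let F_n be the empirical distribution function. Then almost surely, for all n large enough and uniformly over all ε > 0, sup_{θ∈ℝ} {F_n(θ + ε) − F_n(θ)} ≤ 2Mε + 10 n^{−1} log n. -/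
open MeasureTheory Filter ProbabilityTheory


lemma aux_chernoff_indicator {Ω : Type*} [MeasurableSpace Ω] (P : Measure Ω)
    [IsProbabilityMeasure P]
    (X : ℕ → Ω → ℝ) (hXm : ∀ i, Measurable (X i))
    (hindep : iIndepFun X P)
    (B : Set ℝ) (hB : MeasurableSet B)
    (n : ℕ) (q : ℝ) (hq : ∀ i, (P (X i ⁻¹' B)).toReal ≤ q)
    (k : ℝ) :
    (P {ω | k ≤ ∑ i ∈ Finset.range n, Set.indicator B (fun _ => (1:ℝ)) (X i ω)}).toReal
      ≤ Real.exp (- Real.log 2 * k + n * q) := by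
  classical
  set Y : ℕ → Ω → ℝ := fun i ω => Set.indicator B (fun _ => (1:ℝ)) (X i ω) with hYdef
  have hYm : ∀ i, Measurable (Y i) := fun i =>
    (measurable_const.indicator hB).comp (hXm i)
  have hYindep : iIndepFun Y P :=
    hindep.comp (fun _ => Set.indicator B (fun _ => (1:ℝ))) fun _ =>
      measurable_const.indicator hB
  have hYval : ∀ i ω, Y i ω = 0 ∨ Y i ω = 1 := by
    intro i ω
    by_cases h : X i ω ∈ B
    · right; simp [hYdef, Set.indicator_of_mem h]
    · left; simp [hYdef, Set.indicator_of_notMem h]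
  have hYeq : ∀ i, Y i = Set.indicator (X i ⁻¹' B) (fun _ => (1:ℝ)) := by
    intro i; funext ω
    by_cases h : X i ω ∈ B
    · simp [hYdef, Set.indicator_of_mem h, Set.indicator_of_mem (Set.mem_preimage.2 h)]
    · simp [hYdef, Set.indicator_of_notMem h,
        Set.indicator_of_notMem (fun hh => h (Set.mem_preimage.1 hh))]
  have hYint : ∀ i, Integrable (Y i) P := by
    intro i
    rw [hYeq i]
    exact (integrable_const (1:ℝ)).indicator ((hXm i) hB)
  have hexpid : ∀ i, (fun ω => Real.exp (Real.log 2 * Y i ω)) = fun ω => 1 + Y i ω := by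
    intro i; funext ω
    rcases hYval i ω with h | h <;> rw [h]
    · simp
    · rw [mul_one]; rw [Real.exp_log (by norm_num : (0:ℝ) < 2)]; norm_num
  have h_int : ∀ i ∈ Finset.range n,
      Integrable (fun ω => Real.exp (Real.log 2 * Y i ω)) P := by
    intro i _
    rw [hexpid i]
    exact (integrable_const (1:ℝ)).add (hYint i)
  have hlog2 : (0:ℝ) ≤ Real.log 2 := Real.log_nonneg (by norm_num)
  have hint_sum : Integrable (fun ω => Real.exp (Real.log 2 * (∑ i ∈ Finset.range n, Y i) ω)) P :=
    hYindep.integrable_exp_mul_sum hYm h_int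
  have hch := measure_ge_le_exp_mul_mgf (μ := P) (X := ∑ i ∈ Finset.range n, Y i)
    (t := Real.log 2) k hlog2 hint_sum
  have hset : {ω | k ≤ (∑ i ∈ Finset.range n, Y i) ω}
      = {ω | k ≤ ∑ i ∈ Finset.range n, Set.indicator B (fun _ => (1:ℝ)) (X i ω)} := by
    ext ω; simp [hYdef]
  rw [hset] at hch
  refine hch.trans ?_
  have hq0 : 0 ≤ q := le_trans ENNReal.toReal_nonneg (hq 0)
  have hmgf : mgf (∑ i ∈ Finset.range n, Y i) P (Real.log 2) ≤ Real.exp (n * q) := by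
    rw [hYindep.mgf_sum hYm]
    have hmgfi : ∀ i, mgf (Y i) P (Real.log 2) = 1 + (P (X i ⁻¹' B)).toReal := by
      intro i
      unfold mgf
      rw [hexpid i]
      rw [integral_add (integrable_const (1:ℝ)) (hYint i)]
      rw [integral_const, measureReal_def, measure_univ, ENNReal.toReal_one, smul_eq_mul, mul_one]
      congr 1
      rw [hYeq i]
      exact integral_indicator_one ((hXm i) hB)
    calc ∏ i ∈ Finset.range n, mgf (Y i) P (Real.log 2)
        ≤ ∏ _i ∈ Finset.range n, Real.exp q := by
          refine Finset.prod_le_prod (fun i _ => ?_) (fun i _ => ?_)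
          · rw [hmgfi i]; positivity
          · rw [hmgfi i]
            have h1 : (P (X i ⁻¹' B)).toReal ≤ q := hq i
            have h2 := Real.add_one_le_exp q
            linarith
      _ = Real.exp q ^ n := by rw [Finset.prod_const, Finset.card_range]
      _ = Real.exp (n * q) := by rw [← Real.exp_nat_mul]
  calc Real.exp (-Real.log 2 * k) * mgf (∑ i ∈ Finset.range n, Y i) P (Real.log 2)
      ≤ Real.exp (-Real.log 2 * k) * Real.exp (n * q) := by
        exact mul_le_mul_of_nonneg_left hmgf (Real.exp_pos _).le
    _ = Real.exp (-Real.log 2 * k + n * q) := by rw [← Real.exp_add]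


set_option maxHeartbeats 1000000 in
/-- Uniform spacing bound for the empirical distribution function: for an
i.i.d. sample from a continuous density bounded by `M`, almost surely for all
large `n` and uniformly over all `ε > 0` and all `θ`,
`F_n(θ+ε) − F_n(θ) ≤ 2Mε + 10 n⁻¹ log n`. -/
theorem empirical_df_uniform_spacing
    (f : ℝ → ℝ) (hfc : Continuous f) (hf0 : ∀ x, 0 ≤ f x)
    (hfd : ∫ x, f x = 1)
    (M : ℝ) (hM : ∀ x, f x ≤ M)
    (ν : Measure ℝ)
    (hν : ν = volume.withDensity (fun x => ENNReal.ofReal (f x)))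
    {Ω : Type*} [MeasurableSpace Ω] (P : Measure Ω) [IsProbabilityMeasure P]
    (X : ℕ → Ω → ℝ) (hXm : ∀ i, Measurable (X i))
    (hindep : iIndepFun X P)
    (hdist : ∀ i, Measure.map (X i) P = ν)
    -- the empirical distribution function
    (Fn : ℕ → Ω → ℝ → ℝ)
    (hFn : ∀ n ω θ, Fn n ω θ =
      (n : ℝ)⁻¹ * ∑ i ∈ Finset.range n, if X i ω ≤ θ then (1 : ℝ) else 0) :
    ∀ᵐ ω ∂P, ∀ᶠ n in atTop, ∀ ε > (0 : ℝ), ∀ θ : ℝ,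
      Fn n ω (θ + ε) - Fn n ω θ ≤
        2 * M * ε + 10 * Real.log n / n := by
  classical
  have hInt : Integrable f (volume : Measure ℝ) := by
    by_contra h
    rw [integral_undef h] at hfd
    norm_num at hfd
  set F : ℝ → ℝ := fun x => ∫ t in Set.Iic x, f t with hFdef
  have hM0 : 0 ≤ M := le_trans (hf0 0) (hM 0)
  have hF0 : ∀ x, 0 ≤ F x := fun x =>
    setIntegral_nonneg measurableSet_Iic (fun t _ => hf0 t)
  have hF1 : ∀ x, F x ≤ 1 := fun x =>
    hfd ▸ setIntegral_le_integral hInt (ae_of_all _ hf0)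
  have hFmono : Monotone F := by
    intro x y hxy
    exact setIntegral_mono_set hInt.integrableOn (ae_of_all _ hf0)
      (HasSubset.Subset.eventuallyLE (Set.Iic_subset_Iic.2 hxy))
  have hFlip : ∀ x y, x ≤ y → F y - F x ≤ M * (y - x) := by
    intro x y hxy
    have hdiff : F y - F x = ∫ t in Set.Ioc x y, f t := by
      rw [hFdef]
      rw [intervalIntegral.integral_Iic_sub_Iic hInt.integrableOn hInt.integrableOn,
        intervalIntegral.integral_of_le hxy]
    rw [hdiff]
    calc ∫ t in Set.Ioc x y, f t ≤ ∫ _t in Set.Ioc x y, M := by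
          refine setIntegral_mono_on hInt.integrableOn ?_ measurableSet_Ioc (fun t _ => hM t)
          exact integrableOn_const (by rw [Real.volume_Ioc]; exact ENNReal.ofReal_ne_top)
      _ = M * (y - x) := by
          rw [setIntegral_const, smul_eq_mul, measureReal_def, Real.volume_Ioc,
            ENNReal.toReal_ofReal (sub_nonneg.2 hxy), mul_comm]
  have hFcont : Continuous F := by
    have hlip : LipschitzWith (Real.toNNReal M) F := by
      apply LipschitzWith.of_dist_le_mul
      intro x y
      rw [Real.dist_eq, Real.dist_eq, Real.coe_toNNReal M hM0]
      rcases le_total x y with h | h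
      · rw [abs_sub_comm, abs_of_nonneg (sub_nonneg.2 (hFmono h)),
          abs_sub_comm x y, abs_of_nonneg (sub_nonneg.2 h)]
        exact hFlip x y h
      · rw [abs_of_nonneg (sub_nonneg.2 (hFmono h)), abs_of_nonneg (sub_nonneg.2 h)]
        exact hFlip y x h
    exact hlip.continuous
  have hν_Iic : ∀ z, ν (Set.Iic z) = ENNReal.ofReal (F z) := by
    intro z
    rw [hν, withDensity_apply _ measurableSet_Iic,
      ← ofReal_integral_eq_lintegral_ofReal hInt.integrableOn
        (ae_of_all _ (fun t => hf0 t))]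
  have hν_single : ∀ z : ℝ, ν {z} = 0 := by
    intro z
    rw [hν, withDensity_apply _ (measurableSet_singleton z)]
    rw [Measure.restrict_eq_zero.2 Real.volume_singleton]
    simp
  have hνprob : IsProbabilityMeasure ν := by
    constructor
    rw [hν, withDensity_apply _ MeasurableSet.univ, Measure.restrict_univ,
      ← ofReal_integral_eq_lintegral_ofReal hInt (ae_of_all _ hf0), hfd]
    simp
  haveI := hνprob
  have hFtop : ∀ c < (1:ℝ), ∃ x, c < F x := by
    intro c hc
    have hmono : Monotone (fun k : ℕ => Set.Iic ((k:ℝ))) := fun i j h =>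
      Set.Iic_subset_Iic.2 (Nat.cast_le.2 h)
    have hunion : (⋃ k : ℕ, Set.Iic ((k:ℝ))) = Set.univ := by
      ext x
      simp only [Set.mem_iUnion, Set.mem_univ, iff_true, Set.mem_Iic]
      exact exists_nat_ge x
    have ht := tendsto_setIntegral_of_monotone (μ := volume) (f := f)
      (fun k => measurableSet_Iic) hmono (by rw [hunion]; exact hInt.integrableOn)
    rw [hunion, Measure.restrict_univ, hfd] at ht
    obtain ⟨k, hk⟩ := (ht.eventually (eventually_gt_nhds hc)).exists
    exact ⟨(k:ℝ), hk⟩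
  have hFbot : ∀ c, (0:ℝ) < c → ∃ x, F x < c := by
    intro c hc
    have hanti : Antitone (fun k : ℕ => Set.Iic (-(k:ℝ))) := fun i j h =>
      Set.Iic_subset_Iic.2 (neg_le_neg (Nat.cast_le.2 h))
    have hinter : (⋂ k : ℕ, Set.Iic (-(k:ℝ))) = ∅ := by
      ext x
      simp only [Set.mem_iInter, Set.mem_Iic, Set.mem_empty_iff_false, iff_false, not_forall]
      obtain ⟨k, hk⟩ := exists_nat_gt (-x)
      exact ⟨k, by push_neg; linarith⟩
    have ht := tendsto_setIntegral_of_antitone (μ := volume) (f := f)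
      (fun k => measurableSet_Iic) hanti ⟨0, hInt.integrableOn⟩
    rw [hinter, Measure.restrict_empty, integral_zero_measure] at ht
    obtain ⟨k, hk⟩ := (ht.eventually (eventually_lt_nhds hc)).exists
    exact ⟨-(k:ℝ), hk⟩
  -- key measure bound
  have hle_v : ∀ v : ℝ, v ≤ 1 → ν {x | F x ≤ v} ≤ ENNReal.ofReal v := by
    intro v hv
    by_cases hne : {x | F x ≤ v}.Nonempty
    · rcases lt_or_ge v 1 with hv1 | hv1
      · obtain ⟨w, hw⟩ := hFtop v hv1
        have hbdd : BddAbove {x | F x ≤ v} := by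
          refine ⟨w, fun x hx => ?_⟩
          simp only [Set.mem_setOf_eq] at hx
          by_contra hxw
          push_neg at hxw
          have := hFmono hxw.le
          linarith
        have hclosed : IsClosed {x | F x ≤ v} := isClosed_le hFcont continuous_const
        have hz := hclosed.csSup_mem hne hbdd
        have hsub : {x | F x ≤ v} ⊆ Set.Iic (sSup {x | F x ≤ v}) :=
          fun x hx => le_csSup hbdd hx
        calc ν {x | F x ≤ v} ≤ ν (Set.Iic (sSup {x | F x ≤ v})) := measure_mono hsub
          _ = ENNReal.ofReal (F (sSup {x | F x ≤ v})) := hν_Iic _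
          _ ≤ ENNReal.ofReal v := ENNReal.ofReal_le_ofReal hz
      · calc ν {x | F x ≤ v} ≤ ν Set.univ := measure_mono (Set.subset_univ _)
          _ = 1 := measure_univ
          _ ≤ ENNReal.ofReal v := by
              rw [← ENNReal.ofReal_one]; exact ENNReal.ofReal_le_ofReal hv1
    · rw [Set.not_nonempty_iff_eq_empty.1 hne]
      simp
  have hge_u : ∀ u : ℝ, 0 ≤ u → u < 1 → ENNReal.ofReal u ≤ ν {x | F x < u} := by
    intro u hu0 hu1
    rcases eq_or_lt_of_le hu0 with h0 | h0
    · rw [← h0]; simp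
    · obtain ⟨x0, hx0⟩ := hFbot u h0
      have hne : {x | F x < u}.Nonempty := ⟨x0, hx0⟩
      obtain ⟨w, hw⟩ := hFtop u hu1
      have hbdd : BddAbove {x | F x < u} := by
        refine ⟨w, fun x hx => ?_⟩
        simp only [Set.mem_setOf_eq] at hx
        by_contra hxw
        push_neg at hxw
        have := hFmono hxw.le
        linarith
      set z := sSup {x | F x < u} with hz
      have hsub : Set.Iio z ⊆ {x | F x < u} := by
        intro x hx
        obtain ⟨y, hy, hxy⟩ := exists_lt_of_lt_csSup hne hx
        exact lt_of_le_of_lt (hFmono hxy.le) hy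
      have hopen : IsOpen {x | F x < u} := isOpen_lt hFcont continuous_const
      have hFz : u ≤ F z := by
        by_contra h
        push_neg at h
        obtain ⟨δ, hδ, hball⟩ := Metric.isOpen_iff.1 hopen z h
        have hmem : z + δ/2 ∈ {x | F x < u} := by
          apply hball
          rw [Metric.mem_ball, Real.dist_eq]
          have h2 : z + δ/2 - z = δ/2 := by ring
          rw [h2, abs_of_nonneg (by linarith)]
          linarith
        have := le_csSup hbdd hmem
        linarith
      have hIio : ν (Set.Iio z) = ENNReal.ofReal (F z) := by
        have h1 : ν (Set.Iic z) ≤ ν (Set.Iio z) + ν {z} := by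
          rw [← Set.Iio_union_right]
          exact measure_union_le _ _
        rw [hν_single z, add_zero] at h1
        have h2 : ν (Set.Iio z) ≤ ν (Set.Iic z) := measure_mono Set.Iio_subset_Iic_self
        rw [hν_Iic z] at h1 h2
        exact le_antisymm h2 h1
      calc ENNReal.ofReal u ≤ ENNReal.ofReal (F z) := ENNReal.ofReal_le_ofReal hFz
        _ = ν (Set.Iio z) := hIio.symm
        _ ≤ ν {x | F x < u} := measure_mono hsub
  have hmeasB : ∀ u v : ℝ, 0 ≤ u → u < 1 → u ≤ v → v ≤ 1 →
      (ν {x | u ≤ F x ∧ F x ≤ v}).toReal ≤ v - u := by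
    intro u v hu0 hu1 huv hv1
    have hBsub : {x | u ≤ F x ∧ F x ≤ v} ⊆ {x | F x ≤ v} \ {x | F x < u} :=
      fun x hx => ⟨hx.2, not_lt.2 hx.1⟩
    have hmu : MeasurableSet {x | F x < u} :=
      measurableSet_lt hFcont.measurable measurable_const
    have hsub2 : {x | F x < u} ⊆ {x | F x ≤ v} := fun x hx => le_trans hx.le huv
    have hdiff : ν ({x | F x ≤ v} \ {x | F x < u}) = ν {x | F x ≤ v} - ν {x | F x < u} :=
      measure_diff hsub2 hmu.nullMeasurableSet (measure_ne_top ν _)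
    have hb : ν {x | u ≤ F x ∧ F x ≤ v} ≤ ENNReal.ofReal (v - u) := by
      calc ν {x | u ≤ F x ∧ F x ≤ v} ≤ ν ({x | F x ≤ v} \ {x | F x < u}) :=
            measure_mono hBsub
        _ = ν {x | F x ≤ v} - ν {x | F x < u} := hdiff
        _ ≤ ENNReal.ofReal v - ENNReal.ofReal u :=
            tsub_le_tsub (hle_v v hv1) (hge_u u hu0 hu1)
        _ = ENNReal.ofReal (v - u) := (ENNReal.ofReal_sub v hu0).symm
    exact ENNReal.toReal_le_of_le_ofReal (by linarith) hb
  -- the Bernstein/Chernoff events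
  set Bset : ℕ → ℕ → ℕ → Set ℝ := fun n a b => {x | (a:ℝ)/n ≤ F x ∧ F x ≤ (b:ℝ)/n}
    with hBdef
  have hBmeas : ∀ n a b, MeasurableSet (Bset n a b) := fun n a b =>
    (measurableSet_le measurable_const hFcont.measurable).inter
      (measurableSet_le hFcont.measurable measurable_const)
  set A : ℕ → ℕ → ℕ → Set Ω := fun n a b =>
    {ω | 2*((b:ℝ)-(a:ℝ)) + 8 * Real.log n ≤
      ∑ i ∈ Finset.range n, Set.indicator (Bset n a b) (fun _ => (1:ℝ)) (X i ω)} with hAdef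
  have hA : ∀ n a b : ℕ, 1 ≤ n → a ≤ b → a < n → b ≤ n →
      (P (A n a b)).toReal ≤ Real.exp (-5 * Real.log n) := by
    intro n a b hn hab han hbn
    have hnR : (0:ℝ) < n := by exact_mod_cast hn
    have hq : ∀ i, (P (X i ⁻¹' Bset n a b)).toReal ≤ ((b:ℝ)-a)/n := by
      intro i
      have hpre : P (X i ⁻¹' Bset n a b) = ν (Bset n a b) := by
        rw [← hdist i, Measure.map_apply (hXm i) (hBmeas n a b)]
      rw [hpre]
      have habR : (a:ℝ) ≤ (b:ℝ) := by exact_mod_cast hab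
      have h := hmeasB ((a:ℝ)/n) ((b:ℝ)/n) (by positivity)
        (by rw [div_lt_one hnR]; exact_mod_cast han)
        ((div_le_div_iff_of_pos_right hnR).2 habR)
        (by rw [div_le_one hnR]; exact_mod_cast hbn)
      have heq : (b:ℝ)/n - (a:ℝ)/n = ((b:ℝ)-a)/n := by ring
      rw [heq] at h
      exact h
    have hch := aux_chernoff_indicator P X hXm hindep (Bset n a b) (hBmeas n a b) n
      (((b:ℝ)-a)/n) hq (2*((b:ℝ)-(a:ℝ)) + 8 * Real.log n)
    refine le_trans hch ?_
    apply Real.exp_le_exp.2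
    have hnq : (n:ℝ) * (((b:ℝ)-a)/n) = (b:ℝ)-a := by field_simp
    rw [hnq]
    have hlogn : 0 ≤ Real.log n := Real.log_nonneg (by exact_mod_cast hn)
    have hd0 : (0:ℝ) ≤ (b:ℝ) - a := by
      have : (a:ℝ) ≤ (b:ℝ) := by exact_mod_cast hab
      linarith
    nlinarith [Real.log_two_gt_d9,
      mul_nonneg hd0 (by nlinarith [Real.log_two_gt_d9] : (0:ℝ) ≤ 2*Real.log 2 - 1),
      mul_nonneg hlogn (by nlinarith [Real.log_two_gt_d9] : (0:ℝ) ≤ 8*Real.log 2 - 5)]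
  set Pn : ℕ → Finset (ℕ × ℕ) := fun n =>
    (Finset.range n ×ˢ Finset.range (n+1)).filter (fun p => p.1 ≤ p.2) with hPndef
  set E : ℕ → Set Ω := fun n => ⋃ p ∈ Pn n, A n p.1 p.2 with hEdef
  have hcard : ∀ n : ℕ, ((Pn n).card : ℝ) ≤ ((n:ℝ)+1)^2 := by
    intro n
    have h1 : (Pn n).card ≤ n * (n+1) := by
      calc (Pn n).card ≤ ((Finset.range n) ×ˢ (Finset.range (n+1))).card :=
            Finset.card_filter_le _ _
        _ = n * (n+1) := by rw [Finset.card_product, Finset.card_range, Finset.card_range]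
    have h2 : ((Pn n).card : ℝ) ≤ (n:ℝ) * ((n:ℝ)+1) := by exact_mod_cast h1
    nlinarith [Nat.cast_nonneg (α := ℝ) n]
  have hE : ∀ n : ℕ, P (E n) ≤ ENNReal.ofReal (16 / ((n:ℝ)+1)^2) := by
    intro n
    rcases Nat.eq_zero_or_pos n with h0 | hpos
    · subst h0
      calc P (E 0) ≤ 1 := prob_le_one
        _ ≤ ENNReal.ofReal (16 / (((0:ℕ):ℝ)+1)^2) := by
            norm_num
    · have hn1R : (1:ℝ) ≤ n := by exact_mod_cast hpos
      have hexp : ∀ p ∈ Pn n, P (A n p.1 p.2) ≤ ENNReal.ofReal (Real.exp (-5 * Real.log n)) := by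
        intro p hp
        simp only [hPndef, Finset.mem_filter, Finset.mem_product, Finset.mem_range] at hp
        have h := hA n p.1 p.2 hpos hp.2 hp.1.1 (Nat.lt_succ_iff.1 hp.1.2)
        exact (ENNReal.le_ofReal_iff_toReal_le (measure_ne_top P _) (Real.exp_pos _).le).2 h
      refine le_trans (measure_biUnion_finset_le _ _) ?_
      refine le_trans (Finset.sum_le_sum hexp) ?_
      rw [Finset.sum_const, nsmul_eq_mul]
      have hcast : ((Pn n).card : ENNReal) = ENNReal.ofReal ((Pn n).card : ℝ) := by
        simp [ENNReal.ofReal_natCast]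
      rw [hcast, ← ENNReal.ofReal_mul (Nat.cast_nonneg _)]
      apply ENNReal.ofReal_le_ofReal
      have hnRpos : (0:ℝ) < n := by linarith
      have hexpval : Real.exp (-5 * Real.log n) = ((n:ℝ)^(5:ℕ))⁻¹ := by
        rw [show (-5 : ℝ) * Real.log n = Real.log n * (-(5:ℕ)) by push_cast; ring,
          ← Real.rpow_def_of_pos hnRpos, Real.rpow_neg hnRpos.le, Real.rpow_natCast]
      rw [hexpval]
      have h2n : (n:ℝ)+1 ≤ 2*(n:ℝ) := by linarith
      have h5pos : (0:ℝ) < (n:ℝ)^(5:ℕ) := by positivity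
      have hp2 : (0:ℝ) < ((n:ℝ)+1)^2 := by positivity
      have k1 : ((n:ℝ)+1)^4 ≤ (2*(n:ℝ))^4 := pow_le_pow_left₀ (by positivity) h2n 4
      have k3 : (n:ℝ)^4 ≤ (n:ℝ)^5 := pow_le_pow_right₀ hn1R (by norm_num)
      calc (((Pn n).card : ℕ) : ℝ) * ((n:ℝ)^(5:ℕ))⁻¹
          ≤ (((n:ℝ)+1)^2) * ((n:ℝ)^(5:ℕ))⁻¹ := by
            apply mul_le_mul_of_nonneg_right (hcard n) (by positivity)
        _ ≤ 16 / (((n:ℝ)+1)^2) := by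
            rw [← div_eq_mul_inv, div_le_div_iff₀ h5pos hp2]
            nlinarith [k1, k3]
  have hsum : (∑' n, P (E n)) ≠ ⊤ := by
    have hs1 : Summable (fun n : ℕ => 1 / ((n:ℝ))^2) := Real.summable_one_div_nat_pow.2 (by norm_num)
    have hs2 : Summable (fun n : ℕ => 1 / ((n:ℝ)+1)^2) := by
      have := (summable_nat_add_iff 1).2 hs1
      refine this.congr fun n => ?_
      push_cast
      ring
    have hsummable : Summable (fun n : ℕ => 16 / ((n:ℝ)+1)^2) := by
      have := hs2.mul_left (16:ℝ)
      refine this.congr fun n => ?_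
      ring
    refine ne_top_of_le_ne_top ?_ (ENNReal.tsum_le_tsum hE)
    rw [← ENNReal.ofReal_tsum_of_nonneg (fun n => by positivity) hsummable]
    exact ENNReal.ofReal_ne_top
  have hae := MeasureTheory.ae_eventually_notMem hsum
  filter_upwards [hae] with ω hω
  obtain ⟨N, hN⟩ := eventually_atTop.1 hω
  rw [eventually_atTop]
  refine ⟨max N 21, fun n hn => ?_⟩
  intro ε hε θ
  have hnN : N ≤ n := le_trans (le_max_left _ _) hn
  have hn21 : 21 ≤ n := le_trans (le_max_right _ _) hn
  have hn1 : 1 ≤ n := le_trans (by norm_num) hn21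
  have hnR : (0:ℝ) < n := by exact_mod_cast hn1
  have hn21R : (21:ℝ) ≤ n := by exact_mod_cast hn21
  have hlogn : 2 ≤ Real.log n := by
    rw [Real.le_log_iff_exp_le hnR]
    have h1 : Real.exp 2 = Real.exp 1 ^ (2:ℕ) := by
      rw [← Real.exp_nat_mul]; norm_num
    nlinarith [Real.exp_one_lt_d9, Real.exp_pos 1]
  set a : ℕ := min (⌊(n:ℝ) * F θ⌋₊) (n-1) with hadef
  set b : ℕ := min n (⌈(n:ℝ) * F (θ+ε)⌉₊) with hbdef
  have hθε : θ ≤ θ + ε := by linarith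
  have hnFθ0 : 0 ≤ (n:ℝ) * F θ := mul_nonneg hnR.le (hF0 θ)
  have hnFθε0 : 0 ≤ (n:ℝ) * F (θ+ε) := mul_nonneg hnR.le (hF0 _)
  have hacast : (a:ℝ) = min ((⌊(n:ℝ) * F θ⌋₊ : ℕ) : ℝ) (((n-1 : ℕ) : ℕ) : ℝ) := by
    rw [hadef, Nat.cast_min]
  have hbcast : (b:ℝ) = min ((n:ℕ) : ℝ) ((⌈(n:ℝ) * F (θ+ε)⌉₊ : ℕ) : ℝ) := by
    rw [hbdef, Nat.cast_min]
  have hn1cast : (((n-1:ℕ)) : ℝ) = (n:ℝ) - 1 := by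
    rw [Nat.cast_sub hn1]; norm_num
  have haleR : (a:ℝ) ≤ (n:ℝ) * F θ := by
    rw [hacast]
    exact le_trans (min_le_left _ _) (Nat.floor_le hnFθ0)
  have hu_le : (a:ℝ)/n ≤ F θ := by
    rw [div_le_iff₀ hnR]
    linarith [haleR]
  have hu_lt1 : (a:ℝ)/n < 1 := by
    rw [div_lt_one hnR, hacast, hn1cast]
    have := min_le_right ((⌊(n:ℝ) * F θ⌋₊ : ℕ) : ℝ) ((n:ℝ) - 1)
    linarith
  have hbgeR : (n:ℝ) * F (θ+ε) ≤ (b:ℝ) := by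
    rw [hbcast]
    refine le_min ?_ (Nat.le_ceil _)
    calc (n:ℝ) * F (θ+ε) ≤ (n:ℝ) * 1 := by
          exact mul_le_mul_of_nonneg_left (hF1 _) hnR.le
      _ = (n:ℝ) := mul_one _
  have hv_ge : F (θ+ε) ≤ (b:ℝ)/n := by
    rw [le_div_iff₀ hnR]
    linarith [hbgeR]
  have hbn : b ≤ n := min_le_left _ _
  have hab : a ≤ b := by
    have hr : (a:ℝ) ≤ (b:ℝ) := by
      calc (a:ℝ) ≤ (n:ℝ) * F θ := haleR
        _ ≤ (n:ℝ) * F (θ+ε) := mul_le_mul_of_nonneg_left (hFmono hθε) hnR.le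
        _ ≤ (b:ℝ) := hbgeR
    exact_mod_cast hr
  have han : a < n := lt_of_le_of_lt (min_le_right _ _) (Nat.sub_lt hn1 (by norm_num))
  have hd : (b:ℝ) - a ≤ (n:ℝ)*(M*ε) + 2 := by
    have hbub : (b:ℝ) ≤ (n:ℝ)*F (θ+ε) + 1 := by
      rw [hbcast]
      refine le_trans (min_le_right _ _) ?_
      exact (Nat.ceil_lt_add_one hnFθε0).le
    have halb : (n:ℝ)*F θ - 1 ≤ (a:ℝ) := by
      rw [hacast, hn1cast]
      refine le_min ?_ ?_
      · linarith [Nat.lt_floor_add_one ((n:ℝ) * F θ)]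
      · have : (n:ℝ) * F θ ≤ (n:ℝ) * 1 := mul_le_mul_of_nonneg_left (hF1 _) hnR.le
        linarith
    have hlipuse : F (θ+ε) - F θ ≤ M * ε := by
      have := hFlip θ (θ+ε) hθε
      have h2 : θ + ε - θ = ε := by ring
      rw [h2] at this
      exact this
    have := mul_le_mul_of_nonneg_left hlipuse hnR.le
    nlinarith
  have hp : (a, b) ∈ Pn n := by
    simp only [hPndef, Finset.mem_filter, Finset.mem_product, Finset.mem_range]
    exact ⟨⟨han, Nat.lt_succ_of_le hbn⟩, hab⟩
  have hnotin : ω ∉ A n a b := by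
    intro hmem
    exact hN n hnN (Set.mem_biUnion hp hmem)
  have hS : ∑ i ∈ Finset.range n, Set.indicator (Bset n a b) (fun _ => (1:ℝ)) (X i ω)
      < 2*((b:ℝ)-(a:ℝ)) + 8 * Real.log n := by
    by_contra h
    push_neg at h
    exact hnotin h
  have hpt : ∀ i ∈ Finset.range n,
      (if X i ω ≤ θ + ε then (1:ℝ) else 0) - (if X i ω ≤ θ then (1:ℝ) else 0)
        ≤ Set.indicator (Bset n a b) (fun _ => (1:ℝ)) (X i ω) := by
    intro i _
    by_cases h1 : X i ω ≤ θ
    · have h2 : X i ω ≤ θ + ε := by linarith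
      rw [if_pos h1, if_pos h2, sub_self]
      exact Set.indicator_nonneg (fun _ _ => zero_le_one) _
    · by_cases h2 : X i ω ≤ θ + ε
      · rw [if_pos h2, if_neg h1]
        have hmem : X i ω ∈ Bset n a b := by
          have hθX : θ ≤ X i ω := (lt_of_not_ge h1).le
          exact ⟨le_trans hu_le (hFmono hθX), le_trans (hFmono h2) hv_ge⟩
        rw [Set.indicator_of_mem hmem]
        norm_num
      · rw [if_neg h1, if_neg h2, sub_self]
        exact Set.indicator_nonneg (fun _ _ => zero_le_one) _
  rw [hFn n ω (θ+ε), hFn n ω θ, ← mul_sub, ← Finset.sum_sub_distrib]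
  have hsum_le : ∑ i ∈ Finset.range n,
      ((if X i ω ≤ θ+ε then (1:ℝ) else 0) - (if X i ω ≤ θ then (1:ℝ) else 0))
        ≤ 2*((b:ℝ)-(a:ℝ)) + 8 * Real.log n :=
    le_trans (Finset.sum_le_sum hpt) hS.le
  have hinv : (0:ℝ) ≤ ((n:ℝ))⁻¹ := by positivity
  calc ((n:ℝ))⁻¹ * ∑ i ∈ Finset.range n,
        ((if X i ω ≤ θ+ε then (1:ℝ) else 0) - (if X i ω ≤ θ then (1:ℝ) else 0))
      ≤ ((n:ℝ))⁻¹ * (2*((b:ℝ)-(a:ℝ)) + 8 * Real.log n) :=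
        mul_le_mul_of_nonneg_left hsum_le hinv
    _ ≤ 2 * M * ε + 10 * Real.log n / n := by
        rw [inv_mul_le_iff₀ hnR]
        have hexp2 : (n:ℝ) * (2*M*ε + 10*Real.log n / n) = (n:ℝ)*(M*ε)*2 + 10*Real.log n := by
          field_simp
        rw [hexp2]
        linarith [hd, hlogn]
end

section
/- For the normal density: if |x − θ₁| ≥ σ₁|log σ₁| and σ₁ ≤ ε₀ with ε₀ small enough that exp{−(1/4)(log σ₁ + 2)² + 1} ≤ (2ε₀)^{−1} for all σ₁ ≤ ε₀, then φ(x; θ₁, σ₁²) ≤ φ(x; θ₁, 2ε₀²). -/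
open Real

/-- The normal density with mean `θ` and standard deviation `σ`. -/
noncomputable def gaussSD (x θ σ : ℝ) : ℝ :=
  (Real.sqrt (2 * Real.pi * σ ^ 2))⁻¹ * Real.exp (-(x - θ) ^ 2 / (2 * σ ^ 2))

/-- If `|x − θ₁| ≥ σ₁|log σ₁|` and `σ₁ ≤ ε₀` with `ε₀` small enough that
`exp{−(1/4)(log σ₁ + 2)² + 1} ≤ (2ε₀)⁻¹` for all `σ₁ ≤ ε₀`, then
`φ(x; θ₁, σ₁²) ≤ φ(x; θ₁, 2ε₀²)`. -/
theorem gauss_tail_bound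
    (x θ₁ σ₁ ε₀ : ℝ) (hσ₁ : 0 < σ₁) (hε₀ : 0 < ε₀)
    (hx : σ₁ * |Real.log σ₁| ≤ |x - θ₁|) (hσε : σ₁ ≤ ε₀)
    (hsmall : ∀ s : ℝ, 0 < s → s ≤ ε₀ →
      Real.exp (-(1 / 4) * (Real.log s + 2) ^ 2 + 1) ≤ (2 * ε₀)⁻¹) :
    gaussSD x θ₁ σ₁ ≤ gaussSD x θ₁ (Real.sqrt 2 * ε₀) := by
  unfold gaussSD
  set d := x - θ₁ with hd
  set L := Real.log σ₁ with hLdef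
  have h2π : (0:ℝ) < 2 * Real.pi := by positivity
  have hsqrt2 : Real.sqrt 2 > 0 := by positivity
  have hs1 : Real.sqrt (2 * Real.pi * σ₁ ^ 2) = Real.sqrt (2*Real.pi) * σ₁ := by
    rw [Real.sqrt_mul (le_of_lt h2π), Real.sqrt_sq hσ₁.le]
  have hs2 : Real.sqrt (2 * Real.pi * (Real.sqrt 2 * ε₀) ^ 2)
      = Real.sqrt (2*Real.pi) * (Real.sqrt 2 * ε₀) := by
    rw [Real.sqrt_mul (le_of_lt h2π), Real.sqrt_sq (by positivity)]
  have hsq2 : (Real.sqrt 2) ^ 2 = 2 := Real.sq_sqrt (by norm_num)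
  have hden : 2 * (Real.sqrt 2 * ε₀) ^ 2 = 4 * ε₀ ^ 2 := by
    rw [mul_pow, hsq2]; ring
  rw [hs1, hs2, hden, mul_inv, mul_inv, mul_assoc, mul_assoc]
  apply mul_le_mul_of_nonneg_left _ (by positivity)
  -- key exponent inequality
  have hd2 : σ₁^2 * L^2 ≤ d^2 := by
    have h0 : 0 ≤ σ₁ * |L| := by positivity
    calc σ₁^2 * L^2 = (σ₁ * |L|)^2 := by rw [mul_pow, sq_abs]
      _ ≤ |d|^2 := pow_le_pow_left₀ h0 hx 2
      _ = d^2 := sq_abs d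
  have hb : L^2/4 ≤ d^2/(4*σ₁^2) := by
    rw [div_le_div_iff₀ (by norm_num) (by positivity)]
    nlinarith
  have ha : d^2/(4*ε₀^2) ≤ d^2/(4*σ₁^2) := by
    apply div_le_div_of_nonneg_left (by positivity) (by positivity)
    nlinarith
  have hsplit : d^2/(2*σ₁^2) = d^2/(4*σ₁^2) + d^2/(4*σ₁^2) := by
    field_simp; ring
  have hkey : -(d^2) / (2*σ₁^2) ≤ -(d^2)/(4*ε₀^2) - L^2/4 := by
    have : d^2/(4*ε₀^2) + L^2/4 ≤ d^2/(2*σ₁^2) := by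
      rw [hsplit]; linarith
    have hne : -(d^2)/(2*σ₁^2) = -(d^2/(2*σ₁^2)) := by ring
    rw [hne]; linarith [neg_div (4*ε₀^2) (d^2)]
  have hexpL : σ₁⁻¹ = Real.exp (-L) := by
    rw [Real.exp_neg, Real.exp_log hσ₁]
  calc σ₁⁻¹ * Real.exp (-d ^ 2 / (2 * σ₁ ^ 2))
      = Real.exp (-L + -d^2/(2*σ₁^2)) := by rw [Real.exp_add, hexpL]
    _ ≤ Real.exp (-L + (-(d^2)/(4*ε₀^2) - L^2/4)) := by
        apply Real.exp_le_exp.2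
        have : -d^2/(2*σ₁^2) = -(d^2)/(2*σ₁^2) := by ring
        rw [this]; linarith
    _ = Real.exp (-(1/4)*(L+2)^2 + 1) * Real.exp (-d^2/(4*ε₀^2)) := by
        rw [← Real.exp_add]; ring_nf
    _ ≤ (2*ε₀)⁻¹ * Real.exp (-d^2/(4*ε₀^2)) := by
        apply mul_le_mul_of_nonneg_right (hsmall σ₁ hσ₁ hσε) (Real.exp_nonneg _)
    _ ≤ (Real.sqrt 2 * ε₀)⁻¹ * Real.exp (-d^2/(4*ε₀^2)) := by
        apply mul_le_mul_of_nonneg_right _ (Real.exp_nonneg _)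
        apply inv_anti₀ (by positivity)
        have : Real.sqrt 2 ≤ 2 := by
          nlinarith [Real.sq_sqrt (show (0:ℝ) ≤ 2 by norm_num), Real.sqrt_nonneg 2]
        nlinarith
end
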